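/- arXiv:1903.09909 — 7 statements merged into one kernel-verified Lean document; each statement's English description precedes it below -/
import Mathlib

section
/- Let ω > 0, z ∈ ℝ, and let p be a monic polynomial with integer coefficients of degree at least 1. The sequence (p(n)·z)_{n≥0} is equidistributed modulo ω if and only if z/ω is irrational (equivalently, z ∉ ωℚ). -/
open Filter Finset Complex Polynomial

noncomputable section

lemma shift_diff (u : ℕ → ℂ) (hu : ∀ n, ‖u n‖ ≤ 1) (h N : ℕ) (hhN : h ≤ N) :
    ‖(∑ n ∈ range N, u n) - ∑ n ∈ range N, u (n + h)‖ ≤ 2 * h := by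
  have e1 : ∑ n ∈ range N, u (n + h) = ∑ n ∈ Finset.Ico h (N + h), u n := by
    rw [Finset.sum_Ico_eq_sum_range]
    simp [Nat.add_sub_cancel, add_comm]
  have e2 : ∑ n ∈ range N, u n = (∑ n ∈ Finset.Ico 0 h, u n) + ∑ n ∈ Finset.Ico h N, u n := by
    rw [Finset.sum_Ico_consecutive _ (Nat.zero_le h) hhN, Finset.range_eq_Ico]
  have e3 : ∑ n ∈ Finset.Ico h (N + h), u n
      = (∑ n ∈ Finset.Ico h N, u n) + ∑ n ∈ Finset.Ico N (N + h), u n := by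
    rw [Finset.sum_Ico_consecutive _ hhN (Nat.le_add_right N h)]
  have b1 : ‖∑ n ∈ Finset.Ico 0 h, u n‖ ≤ h := by
    calc ‖∑ n ∈ Finset.Ico 0 h, u n‖ ≤ ∑ n ∈ Finset.Ico 0 h, ‖u n‖ := norm_sum_le _ _
    _ ≤ ∑ _n ∈ Finset.Ico 0 h, (1:ℝ) := Finset.sum_le_sum fun i _ => hu i
    _ = h := by simp
  have b2 : ‖∑ n ∈ Finset.Ico N (N + h), u n‖ ≤ h := by
    calc ‖∑ n ∈ Finset.Ico N (N+h), u n‖ ≤ ∑ n ∈ Finset.Ico N (N+h), ‖u n‖ := norm_sum_le _ _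
    _ ≤ ∑ _n ∈ Finset.Ico N (N+h), (1:ℝ) := Finset.sum_le_sum fun i _ => hu i
    _ = h := by simp
  rw [e1, e2, e3]
  have : (∑ n ∈ Finset.Ico 0 h, u n) + (∑ n ∈ Finset.Ico h N, u n)
      - ((∑ n ∈ Finset.Ico h N, u n) + ∑ n ∈ Finset.Ico N (N + h), u n)
      = (∑ n ∈ Finset.Ico 0 h, u n) - ∑ n ∈ Finset.Ico N (N + h), u n := by ring
  rw [this]
  calc ‖_ - _‖ ≤ ‖∑ n ∈ Finset.Ico 0 h, u n‖ + ‖∑ n ∈ Finset.Ico N (N + h), u n‖ := norm_sub_le _ _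
  _ ≤ h + h := add_le_add b1 b2
  _ = 2 * h := by ring

lemma Wbound (u : ℕ → ℂ) (hu : ∀ n, ‖u n‖ ≤ 1) (N h h' : ℕ) (hle : h' ≤ h) (hN : h' ≤ N) :
    ‖∑ n ∈ range N, u (n + h) * (starRingEnd ℂ) (u (n + h'))‖
      ≤ ‖∑ n ∈ range N, u (n + (h - h')) * (starRingEnd ℂ) (u n)‖ + 2 * h' := by
  set δ := h - h' with hδ
  set v : ℕ → ℂ := fun n => u (n + δ) * (starRingEnd ℂ) (u n) with hv
  have hv1 : ∀ n, ‖v n‖ ≤ 1 := by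
    intro n
    rw [hv]
    simp only [norm_mul, RCLike.norm_conj]
    exact mul_le_one₀ (hu _) (norm_nonneg _) (hu _)
  have hshift : ∀ n, v (n + h') = u (n + h) * (starRingEnd ℂ) (u (n + h')) := by
    intro n
    have heq : n + h' + δ = n + h := by omega
    simp only [hv]
    rw [heq]
  have := shift_diff v hv1 h' N hN
  calc ‖∑ n ∈ range N, u (n + h) * (starRingEnd ℂ) (u (n + h'))‖
      = ‖∑ n ∈ range N, v (n + h')‖ := by simp_rw [hshift]
    _ = ‖(∑ n ∈ range N, v n) - ((∑ n ∈ range N, v n) - ∑ n ∈ range N, v (n + h'))‖ := by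
        congr 1; ring
    _ ≤ ‖∑ n ∈ range N, v n‖ + ‖(∑ n ∈ range N, v n) - ∑ n ∈ range N, v (n + h')‖ :=
        norm_sub_le _ _
    _ ≤ ‖∑ n ∈ range N, v n‖ + 2 * h' := by linarith

lemma step2lem (u : ℕ → ℂ) (hu : ∀ n, ‖u n‖ ≤ 1) (H N : ℕ) (hHN : H ≤ N) :
    ‖∑ n ∈ range N, ∑ h ∈ range H, u (n + h)‖ ^ 2
      ≤ N * ((H:ℝ) * N + H * H *
        ((∑ δ ∈ Finset.Ico 1 H, ‖∑ n ∈ range N, u (n + δ) * (starRingEnd ℂ) (u n)‖) + 2 * H)) := by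
  set E : ℝ := ∑ δ ∈ Finset.Ico 1 H, ‖∑ n ∈ range N, u (n + δ) * (starRingEnd ℂ) (u n)‖ with hE
  have hEnneg : 0 ≤ E := Finset.sum_nonneg fun _ _ => norm_nonneg _
  set v : ℕ → ℂ := fun n => ∑ h ∈ range H, u (n + h) with hv
  -- 2a
  have h2a : ‖∑ n ∈ range N, v n‖ ≤ ∑ n ∈ range N, ‖v n‖ := norm_sum_le _ _
  -- 2b: Cauchy-Schwarz
  have h2b : (∑ n ∈ range N, ‖v n‖) ^ 2 ≤ (N:ℝ) * ∑ n ∈ range N, ‖v n‖ ^ 2 := by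
    have := Finset.sum_mul_sq_le_sq_mul_sq (range N) (fun _ => (1:ℝ)) (fun n => ‖v n‖)
    simpa using this
  -- W bound
  set W : ℕ → ℕ → ℂ := fun h h' => ∑ n ∈ range N, u (n + h) * (starRingEnd ℂ) (u (n + h')) with hW
  have hWb : ∀ h ∈ range H, ∀ h' ∈ range H,
      ‖W h h'‖ ≤ (if h = h' then (N:ℝ) else 0) + (E + 2 * H) := by
    intro h hh h' hh'
    have hhH := mem_range.1 hh
    have hh'H := mem_range.1 hh'
    rcases eq_or_ne h h' with rfl | hne
    · rw [if_pos rfl]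
      have : ‖W h h‖ ≤ (N:ℝ) := by
        calc ‖W h h‖ ≤ ∑ n ∈ range N, ‖u (n + h) * (starRingEnd ℂ) (u (n + h))‖ := norm_sum_le _ _
          _ ≤ ∑ _n ∈ range N, (1:ℝ) := Finset.sum_le_sum (fun i _ => by
              simp only [norm_mul, RCLike.norm_conj]
              exact mul_le_one₀ (hu _) (norm_nonneg _) (hu _))
          _ = N := by simp
      linarith
    · simp only [if_neg hne]
      -- wlog via two cases
      have main : ∀ a b : ℕ, b < a → a < H → ‖W a b‖ ≤ E + 2 * H := by
        intro a b hba haH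
        have h1 : ‖W a b‖ ≤ ‖∑ n ∈ range N, u (n + (a - b)) * (starRingEnd ℂ) (u n)‖ + 2 * b :=
          Wbound u hu N a b hba.le (le_trans (le_of_lt (lt_of_lt_of_le hba (le_of_lt haH))) hHN)
        have h2 : ‖∑ n ∈ range N, u (n + (a - b)) * (starRingEnd ℂ) (u n)‖ ≤ E := by
          rw [hE]
          refine Finset.single_le_sum (f := fun δ => ‖∑ n ∈ range N, u (n + δ) * (starRingEnd ℂ) (u n)‖)
            (fun _ _ => norm_nonneg _) ?_
          rw [Finset.mem_Ico]
          omega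
        have h3 : (b:ℝ) ≤ H := by exact_mod_cast (le_of_lt (lt_of_lt_of_le hba (le_of_lt haH))).trans (le_refl H)
        linarith
      rcases lt_or_gt_of_ne hne with hlt | hgt
      · -- h < h' : conjugate
        have hconj : W h h' = (starRingEnd ℂ) (W h' h) := by
          rw [hW]
          simp only [map_sum, map_mul, RingHomCompTriple.comp_apply, RingHom.id_apply,
            Complex.conj_conj]
          exact Finset.sum_congr rfl fun n _ => (mul_comm _ _)
        rw [hconj, RCLike.norm_conj, zero_add]
        exact main h' h hlt hh'H
      · rw [zero_add]
        exact main h h' hgt hhH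
  -- 2c
  have h2c : ∑ n ∈ range N, ‖v n‖ ^ 2 ≤ (H:ℝ) * N + H * H * (E + 2 * H) := by
    have e1 : ∀ n, (‖v n‖:ℝ) ^ 2 = (v n * (starRingEnd ℂ) (v n)).re := by
      intro n
      simp only [Complex.mul_conj, Complex.normSq_eq_norm_sq,
        ← Complex.ofReal_pow, Complex.ofReal_re]
    have e2 : ∀ n, v n * (starRingEnd ℂ) (v n)
        = ∑ h ∈ range H, ∑ h' ∈ range H, u (n + h) * (starRingEnd ℂ) (u (n + h')) := by
      intro n
      rw [hv]
      rw [map_sum, Finset.sum_mul_sum]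
    have e3 : ∑ n ∈ range N, ‖v n‖ ^ 2
        = (∑ h ∈ range H, ∑ h' ∈ range H, W h h').re := by
      simp_rw [e1, e2]
      rw [← Complex.re_sum]
      congr 1
      rw [Finset.sum_comm (s := range N)]
      refine Finset.sum_congr rfl fun h _ => ?_
      rw [Finset.sum_comm (s := range N)]
    rw [e3]
    calc (∑ h ∈ range H, ∑ h' ∈ range H, W h h').re
        ≤ ‖∑ h ∈ range H, ∑ h' ∈ range H, W h h'‖ := Complex.re_le_norm _
      _ ≤ ∑ h ∈ range H, ‖∑ h' ∈ range H, W h h'‖ := norm_sum_le _ _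
      _ ≤ ∑ h ∈ range H, ∑ h' ∈ range H, ‖W h h'‖ :=
          Finset.sum_le_sum fun h _ => norm_sum_le _ _
      _ ≤ ∑ h ∈ range H, ∑ h' ∈ range H, ((if h = h' then (N:ℝ) else 0) + (E + 2 * H)) :=
          Finset.sum_le_sum fun h hh => Finset.sum_le_sum fun h' hh' => hWb h hh h' hh'
      _ = (H:ℝ) * N + H * H * (E + 2 * H) := by
          have hsplit : ∀ h ∈ range H,
              (∑ h' ∈ range H, ((if h = h' then (N:ℝ) else 0) + (E + 2 * H)))
                = (N:ℝ) + H * (E + 2 * H) := by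
            intro h hh
            rw [Finset.sum_add_distrib, Finset.sum_ite_eq, Finset.sum_const, card_range]
            simp only [hh, if_true, nsmul_eq_mul, Finset.mem_range]
            try ring
          rw [Finset.sum_congr rfl hsplit, Finset.sum_const, card_range, nsmul_eq_mul]
          ring
  -- combine
  have hvnonneg : 0 ≤ ∑ n ∈ range N, ‖v n‖ := Finset.sum_nonneg fun _ _ => norm_nonneg _
  have h1 : ‖∑ n ∈ range N, v n‖ ^ 2 ≤ (∑ n ∈ range N, ‖v n‖) ^ 2 := by
    apply pow_le_pow_left₀ (norm_nonneg _) h2a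
  calc ‖∑ n ∈ range N, v n‖ ^ 2 ≤ (∑ n ∈ range N, ‖v n‖) ^ 2 := h1
    _ ≤ (N:ℝ) * ∑ n ∈ range N, ‖v n‖ ^ 2 := h2b
    _ ≤ (N:ℝ) * ((H:ℝ) * N + H * H * (E + 2 * H)) := by
        apply mul_le_mul_of_nonneg_left h2c (by positivity)


lemma vdc (u : ℕ → ℂ) (hu : ∀ n, ‖u n‖ ≤ 1)
    (hcor : ∀ d : ℕ, 1 ≤ d →
      Tendsto (fun N : ℕ => ‖∑ n ∈ range N, u (n + d) * (starRingEnd ℂ) (u n)‖ / N) atTop (nhds 0)) :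
    Tendsto (fun N : ℕ => ‖∑ n ∈ range N, u n‖ / N) atTop (nhds 0) := by
  have key : ∀ ε : ℝ, 0 < ε → ∀ᶠ N : ℕ in atTop, ‖∑ n ∈ range N, u n‖ / N ≤ ε := by
    intro ε hε
    obtain ⟨H, hH1, h16⟩ : ∃ H : ℕ, 1 ≤ H ∧ 16 ≤ ε ^ 2 * H := by
      obtain ⟨n, hn⟩ := exists_nat_ge ((16:ℝ) / ε ^ 2)
      refine ⟨max 1 n, le_max_left _ _, ?_⟩
      have h2 : (n:ℝ) ≤ (max 1 n : ℕ) := Nat.cast_le.2 (le_max_right _ _)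
      have hε2 : (0:ℝ) < ε ^ 2 := by positivity
      rw [div_le_iff₀ hε2] at hn
      nlinarith
    have hH1R : (1:ℝ) ≤ H := by exact_mod_cast hH1
    have hHpos : (0:ℝ) < H := by linarith
    -- E N / N → 0
    set C : ℕ → ℕ → ℂ := fun d N => ∑ n ∈ range N, u (n + d) * (starRingEnd ℂ) (u n) with hC
    set E : ℕ → ℝ := fun N => ∑ δ ∈ Finset.Ico 1 H, ‖C δ N‖ with hE
    have hEtend : Tendsto (fun N : ℕ => E N / N) atTop (nhds 0) := by
      have : (fun N : ℕ => E N / N) = fun N : ℕ => ∑ δ ∈ Finset.Ico 1 H, ‖C δ N‖ / N := by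
        funext N; rw [hE]; exact Finset.sum_div _ _ _
      rw [this]
      have := tendsto_finset_sum (Finset.Ico 1 H)
        (fun δ (hδ : δ ∈ Finset.Ico 1 H) => hcor δ (Finset.mem_Ico.1 hδ).1)
      simpa using this
    have ev1 : ∀ᶠ N : ℕ in atTop, E N / N < ε ^ 2 / 16 :=
      hEtend.eventually_lt_const (by positivity)
    have ev2 : ∀ᶠ N : ℕ in atTop, (2 * H : ℝ) / N < min (ε ^ 2 / 16) ε :=
      (tendsto_const_div_atTop_nhds_zero_nat (2*(H:ℝ))).eventually_lt_const (by positivity)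
    filter_upwards [ev1, ev2, eventually_ge_atTop H, eventually_ge_atTop 1] with N hev1 hev2 hHN h1N
    have hNpos : (0:ℝ) < N := by exact_mod_cast h1N
    have hHNR : (H:ℝ) ≤ N := by exact_mod_cast hHN
    have hEb : E N ≤ ε ^ 2 / 16 * N := le_of_lt ((div_lt_iff₀ hNpos).1 hev1)
    have h2Hb : (2*H:ℝ) ≤ ε ^ 2 / 16 * N :=
      le_of_lt ((div_lt_iff₀ hNpos).1 (lt_of_lt_of_le hev2 (min_le_left _ _)))
    have hHe : (2*H:ℝ) ≤ ε * N :=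
      le_of_lt ((div_lt_iff₀ hNpos).1 (lt_of_lt_of_le hev2 (min_le_right _ _)))
    set A : ℂ := ∑ n ∈ range N, u n with hA
    set T : ℂ := ∑ n ∈ range N, ∑ h ∈ range H, u (n + h) with hT
    set a : ℝ := ‖A‖ with ha
    set t : ℝ := ‖T‖ with ht
    have hanneg : 0 ≤ a := norm_nonneg _
    have htnneg : 0 ≤ t := norm_nonneg _
    have hEnneg : 0 ≤ E N := Finset.sum_nonneg fun _ _ => norm_nonneg _
    -- Step 1 : a * H ≤ t + H * H
    have step1 : a * H ≤ t + H * H := by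
      have hd : (H:ℂ) * A - T = ∑ h ∈ range H, (A - ∑ n ∈ range N, u (n + h)) := by
        rw [hT, Finset.sum_comm, Finset.sum_sub_distrib]
        simp [Finset.sum_const, card_range, nsmul_eq_mul]
      have hbd : ‖(H:ℂ) * A - T‖ ≤ H * H := by
        rw [hd]
        calc ‖∑ h ∈ range H, (A - ∑ n ∈ range N, u (n + h))‖
            ≤ ∑ h ∈ range H, ‖A - ∑ n ∈ range N, u (n + h)‖ := norm_sum_le _ _
          _ ≤ ∑ h ∈ range H, 2 * (h:ℝ) := Finset.sum_le_sum fun h hh => by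
              exact shift_diff u hu h N (le_trans (le_of_lt (mem_range.1 hh)) hHN)
          _ ≤ H * H := by
              have : ∑ h ∈ range H, 2 * (h:ℝ) = 2 * ∑ h ∈ range H, (h:ℝ) := by
                rw [Finset.mul_sum]
              rw [this]
              have h1 : ∑ h ∈ range H, (h:ℝ) = ((∑ h ∈ range H, h : ℕ) : ℝ) := by push_cast; ring
              have h2 : (∑ h ∈ range H, h) * 2 = H * (H - 1) := Finset.sum_range_id_mul_two H
              have h3 : (H * (H-1) : ℕ) ≤ H * H := Nat.mul_le_mul_left H (Nat.sub_le H 1)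
              have : 2 * ∑ h ∈ range H, (h:ℝ) = ((H * (H-1) : ℕ) : ℝ) := by
                rw [h1, ← h2]; push_cast; ring
              rw [this]
              exact_mod_cast h3
      have : ‖(H:ℂ) * A‖ ≤ t + H * H := by
        calc ‖(H:ℂ) * A‖ = ‖T + ((H:ℂ) * A - T)‖ := by ring_nf
          _ ≤ ‖T‖ + ‖(H:ℂ) * A - T‖ := norm_add_le _ _
          _ ≤ t + H * H := by rw [← ht]; linarith
      rwa [norm_mul, Complex.norm_natCast, mul_comm] at this
    -- Step 2 : t ^ 2 ≤ N * (H * N + H * H * (E N + 2 * H))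
    have step2 : t ^ 2 ≤ N * (H * N + H * H * (E N + 2 * H)) := by
      rw [ht, hT, hE, hC]
      exact step2lem u hu H N hHN
    -- Step 3 : conclude
    clear_value C E A T a t
    clear hu hcor hEtend ev1 ev2 hev1 hev2 hC hE hA hT
    have hEH : E N + 2 * H ≤ ε ^ 2 / 8 * N := by linarith
    have ht2 : t ^ 2 ≤ (ε * H * N / 2) ^ 2 := by
      have b1 : (H:ℝ) * N ^ 2 ≤ ε ^ 2 * H ^ 2 * N ^ 2 / 16 := by
        nlinarith [mul_le_mul_of_nonneg_right h16 (show (0:ℝ) ≤ (H:ℝ) * (N:ℝ)^2 / 16 by positivity)]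
      have b2 : (N:ℝ) * (H * N + H * H * (E N + 2 * H)) ≤ H * N ^ 2 + ε^2 * H^2 * N^2 / 8 := by
        nlinarith [mul_le_mul_of_nonneg_left hEH (show (0:ℝ) ≤ (H:ℝ)^2 * N by positivity)]
      have expand : (ε * (H:ℝ) * N / 2) ^ 2 = ε^2 * H^2 * N^2 / 4 := by ring
      rw [expand]
      linarith [b1, b2, step2, show (0:ℝ) ≤ ε^2*(H:ℝ)^2*(N:ℝ)^2 from by positivity]
    have htle : t ≤ ε * H * N / 2 := by
      calc t = Real.sqrt (t ^ 2) := (Real.sqrt_sq htnneg).symm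
        _ ≤ Real.sqrt ((ε * H * N / 2) ^ 2) := Real.sqrt_le_sqrt ht2
        _ = ε * H * N / 2 := Real.sqrt_sq (by positivity)
    have haN : a ≤ ε * N := by
      have hHsq : (H:ℝ) * H ≤ ε * N * H / 2 := by
        have := mul_le_mul_of_nonneg_right hHe (show (0:ℝ) ≤ (H:ℝ)/2 by positivity)
        nlinarith [this]
      have key2 : a * H ≤ ε * N * H := by linarith [step1, htle, hHsq]
      exact le_of_mul_le_mul_right (by linarith [key2]) hHpos
    rw [div_le_iff₀ hNpos]; linarith
  rw [Metric.tendsto_atTop]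
  intro ε hε
  obtain ⟨N₀, hN₀⟩ := Filter.eventually_atTop.1 (key (ε/2) (by linarith))
  refine ⟨N₀, fun n hn => ?_⟩
  have h1 := hN₀ n hn
  have h2 : (0:ℝ) ≤ ‖∑ m ∈ range n, u m‖ / n := by positivity
  rw [dist_zero_right, Real.norm_eq_abs, _root_.abs_of_nonneg h2]
  linarith

lemma e_norm (a : ℝ) : ‖Complex.exp (2 * Real.pi * Complex.I * a)‖ = 1 := by
  rw [Complex.norm_exp]
  have : (2 * (Real.pi:ℂ) * Complex.I * (a:ℂ)).re = 0 := by simp [Complex.mul_re]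
  rw [this, Real.exp_zero]

lemma e_mul_conj (a b : ℝ) :
    Complex.exp (2 * Real.pi * Complex.I * a) *
      (starRingEnd ℂ) (Complex.exp (2 * Real.pi * Complex.I * b))
    = Complex.exp (2 * Real.pi * Complex.I * ((a - b : ℝ) : ℂ)) := by
  rw [← Complex.exp_conj, ← Complex.exp_add]
  congr 1
  simp only [map_mul, Complex.conj_I, Complex.conj_ofReal, map_ofNat]
  push_cast
  ring

lemma e_ne_one {c : ℝ} (hc : Irrational c) :
    Complex.exp (2 * Real.pi * Complex.I * c) ≠ 1 := by
  intro h
  rw [Complex.exp_eq_one_iff] at h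
  obtain ⟨n, hn⟩ := h
  have hI : (2 * (Real.pi:ℂ) * Complex.I) ≠ 0 := by
    simp [Real.pi_ne_zero, Complex.I_ne_zero]
  have hcn : (c:ℂ) = (n:ℂ) := by
    apply mul_left_cancel₀ hI
    rw [hn]; ring
  exact hc.ne_int n (by exact_mod_cast hcn)

/-- Weyl's theorem: exponential sums of polynomials with irrational leading coefficient. -/
lemma weyl_poly (d : ℕ) : ∀ P : Polynomial ℝ, P.natDegree = d → 1 ≤ d →
    Irrational P.leadingCoeff →
    Tendsto (fun N : ℕ => ‖∑ n ∈ range N, Complex.exp (2 * Real.pi * Complex.I * (P.eval (n:ℝ)))‖ / N)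
      atTop (nhds 0) := by
  induction d with
  | zero => intro P _ h; omega
  | succ d ih =>
    intro P hPd _ hirr
    rcases Nat.eq_zero_or_pos d with rfl | hd1
    · -- base case: degree 1
      have hdeg : P.natDegree < 2 := by omega
      have heval : ∀ x : ℝ, P.eval x = P.coeff 0 + P.coeff 1 * x := by
        intro x
        rw [Polynomial.eval_eq_sum_range' hdeg]
        simp [Finset.sum_range_succ]
      have hlc : P.leadingCoeff = P.coeff 1 := by rw [Polynomial.leadingCoeff, hPd]
      set r : ℂ := Complex.exp (2 * Real.pi * Complex.I * (P.coeff 1)) with hr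
      have hrne : r ≠ 1 := e_ne_one (hlc ▸ hirr)
      have hterm : ∀ n : ℕ, Complex.exp (2 * Real.pi * Complex.I * (P.eval (n:ℝ)))
          = Complex.exp (2 * Real.pi * Complex.I * (P.coeff 0)) * r ^ n := by
        intro n
        rw [heval, hr, ← Complex.exp_nat_mul, ← Complex.exp_add]
        congr 1
        push_cast
        ring
      have hbound : ∀ N : ℕ, ‖∑ n ∈ range N, Complex.exp (2 * Real.pi * Complex.I * (P.eval (n:ℝ)))‖
          ≤ 2 / ‖r - 1‖ := by
        intro N
        simp_rw [hterm]
        rw [← Finset.mul_sum, norm_mul, e_norm, one_mul, geom_sum_eq hrne]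
        rw [norm_div]
        have h1 : ‖r ^ N - 1‖ ≤ 2 := by
          calc ‖r ^ N - 1‖ ≤ ‖r ^ N‖ + ‖(1:ℂ)‖ := norm_sub_le _ _
            _ = 2 := by rw [norm_pow, hr, e_norm]; norm_num
        have h2 : (0:ℝ) < ‖r - 1‖ := by
          rw [norm_pos_iff]
          exact sub_ne_zero.2 hrne
        gcongr
      apply squeeze_zero (fun N => by positivity) (fun N => ?_)
          (tendsto_const_div_atTop_nhds_zero_nat (2 / ‖r - 1‖))
      rcases Nat.eq_zero_or_pos N with rfl | hN
      · simp
      · exact (div_le_div_iff_of_pos_right (by exact_mod_cast hN)).2 (hbound N)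
    · -- inductive step
      apply vdc _ (fun n => le_of_eq (e_norm _))
      intro δ hδ
      set Q : Polynomial ℝ := Polynomial.taylor (δ:ℝ) P - P with hQ
      have hQcoeff : Q.coeff d = ((d:ℝ) + 1) * δ * P.leadingCoeff := by
        rw [hQ, Polynomial.coeff_sub, Polynomial.taylor_coeff]
        have hnd : (Polynomial.hasseDeriv d P).natDegree < 2 :=
          lt_of_le_of_lt (Polynomial.natDegree_hasseDeriv_le P d) (by omega)
        rw [Polynomial.eval_eq_sum_range' hnd]
        simp only [Finset.sum_range_succ, Finset.sum_range_one, pow_zero, mul_one, pow_one]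
        rw [Polynomial.hasseDeriv_coeff, Polynomial.hasseDeriv_coeff]
        simp only [zero_add, Nat.choose_self]
        have hch : (1 + d).choose d = d + 1 := by
          rw [Nat.add_comm, Nat.choose_succ_self_right]
        rw [hch]
        rw [Polynomial.leadingCoeff, hPd]
        push_cast
        ring
      have hQtop : Q.coeff (d+1) = 0 := by
        rw [hQ, Polynomial.coeff_sub, Polynomial.taylor_coeff]
        have hnd : (Polynomial.hasseDeriv (d+1) P).natDegree < 1 :=
          lt_of_le_of_lt (Polynomial.natDegree_hasseDeriv_le P (d+1)) (by omega)
        rw [Polynomial.eval_eq_sum_range' hnd]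
        simp [Polynomial.hasseDeriv_coeff, Nat.choose_self]
      have hδR : ((δ:ℝ)) ≠ 0 := Nat.cast_ne_zero.2 (by omega)
      have hQirr : Irrational (Q.coeff d) := by
        rw [hQcoeff]
        have h1 : Irrational (((((d+1) * δ : ℕ)):ℝ) * P.leadingCoeff) :=
          hirr.natCast_mul (by positivity)
        convert h1 using 2
        push_cast
        ring
      have hQne : Q.coeff d ≠ 0 := hQirr.ne_zero
      have hQle : Q.natDegree ≤ d + 1 := by
        rw [hQ]
        refine le_trans (Polynomial.natDegree_sub_le _ _) ?_
        simp [Polynomial.natDegree_taylor, hPd]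
      have hQd : Q.natDegree = d := by
        have hle : Q.natDegree ≤ d := by
          by_contra hcon
          push_neg at hcon
          have hQd1 : Q.natDegree = d + 1 := by omega
          have h0 : Q.leadingCoeff = 0 := by
            rw [Polynomial.leadingCoeff, hQd1]; exact hQtop
          have hz : Q = 0 := Polynomial.leadingCoeff_eq_zero.1 h0
          rw [hz] at hQne
          simp at hQne
        exact le_antisymm hle (Polynomial.le_natDegree_of_ne_zero hQne)
      have hQlc : Irrational Q.leadingCoeff := by
        rwa [Polynomial.leadingCoeff, hQd]
      have hsum : ∀ N : ℕ, (∑ n ∈ range N,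
          Complex.exp (2 * Real.pi * Complex.I * (P.eval (((n + δ : ℕ)):ℝ))) *
            (starRingEnd ℂ) (Complex.exp (2 * Real.pi * Complex.I * (P.eval (n:ℝ)))))
          = ∑ n ∈ range N, Complex.exp (2 * Real.pi * Complex.I * (Q.eval (n:ℝ))) := by
        intro N
        refine Finset.sum_congr rfl fun n _ => ?_
        rw [e_mul_conj]
        congr 2
        rw [hQ, Polynomial.eval_sub, Polynomial.taylor_eval]
        push_cast
        ring
      simpa only [hsum] using ih Q hQd hd1 hQlc

lemma char_sum (ω z : ℝ) (hω : 0 < ω) (hirr : Irrational (z / ω))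
    (p : Polynomial ℤ) (hp : p.Monic) (hdeg : 1 ≤ p.natDegree) (k : ℤ) (hk : k ≠ 0) :
    Tendsto (fun N : ℕ => (∑ n ∈ range N,
        Complex.exp (2 * Real.pi * Complex.I *
          (((k:ℝ) * (((p.eval (n:ℤ) : ℤ)):ℝ) * z / ω : ℝ) : ℂ))) / (N:ℂ))
      atTop (nhds 0) := by
  set c : ℝ := (k:ℝ) * z / ω with hc
  have hcirr : Irrational c := by
    have : Irrational ((k:ℝ) * (z / ω)) := hirr.intCast_mul hk
    rwa [hc, mul_div_assoc]
  set R : Polynomial ℝ := Polynomial.C c * (p.map (Int.castRingHom ℝ)) with hR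
  have hmap_monic : (p.map (Int.castRingHom ℝ)).Monic := hp.map _
  have hcne : c ≠ 0 := hcirr.ne_zero
  have hRdeg : R.natDegree = p.natDegree := by
    rw [hR, Polynomial.natDegree_C_mul hcne, hp.natDegree_map]
  have hRlc : Irrational R.leadingCoeff := by
    rw [hR, Polynomial.leadingCoeff_mul, Polynomial.leadingCoeff_C, hmap_monic.leadingCoeff,
      mul_one]
    exact hcirr
  have hReval : ∀ n : ℕ, R.eval (n:ℝ) = (k:ℝ) * (((p.eval (n:ℤ) : ℤ)):ℝ) * z / ω := by
    intro n
    rw [hR, Polynomial.eval_mul, Polynomial.eval_C]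
    have : ((n:ℝ)) = ((n:ℤ) : ℝ) := by push_cast; ring
    rw [this, Polynomial.eval_intCast_map]
    simp only [eq_intCast, hc]
    push_cast
    ring
  have hW := weyl_poly p.natDegree R hRdeg hdeg hRlc
  rw [tendsto_zero_iff_norm_tendsto_zero]
  have heq : (fun N : ℕ => ‖(∑ n ∈ range N,
      Complex.exp (2 * Real.pi * Complex.I *
        (((k:ℝ) * (((p.eval (n:ℤ) : ℤ)):ℝ) * z / ω : ℝ) : ℂ))) / (N:ℂ)‖)
      = fun N : ℕ => ‖∑ n ∈ range N, Complex.exp (2 * Real.pi * Complex.I * (R.eval (n:ℝ)))‖ / N := by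
    funext N
    rw [norm_div, Complex.norm_natCast]
    congr 2
    refine Finset.sum_congr rfl fun n _ => ?_
    rw [hReval]
  rw [heq]
  exact hW

-- integral of a nonzero character over a period is zero
lemma char_integral (ω : ℝ) (hω : 0 < ω) (k : ℤ) (hk : k ≠ 0) :
    ∫ x in (0:ℝ)..ω, Complex.exp (2 * Real.pi * Complex.I * k * x / ω) = 0 := by
  have hc : (2 * (Real.pi:ℂ) * Complex.I * k / ω) ≠ 0 := by
    apply div_ne_zero
    · simp [Real.pi_ne_zero, Complex.I_ne_zero, hk]
    · exact_mod_cast hω.ne'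
  have heq : (fun x : ℝ => Complex.exp (2 * Real.pi * Complex.I * k * x / ω))
      = fun x : ℝ => Complex.exp ((2 * Real.pi * Complex.I * k / ω) * x) := by
    funext x; congr 1; ring
  rw [heq, integral_exp_mul_complex hc]
  have h1 : (2 * (Real.pi:ℂ) * Complex.I * k / ω) * ω = 2 * Real.pi * Complex.I * k := by
    rw [div_mul_eq_mul_div, mul_div_assoc, div_self (by exact_mod_cast hω.ne' : (ω:ℂ) ≠ 0), mul_one]
  rw [h1]
  have h2 : Complex.exp (2 * Real.pi * Complex.I * k) = 1 := by
    have := Complex.exp_int_mul_two_pi_mul_I k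
    rw [← this]; congr 1; ring
  simp [h2]

/-- For `ω > 0`, `z ∈ ℝ` and a monic integer polynomial `p` of degree
at least 1, the sequence `(p(n)·z)` is equidistributed modulo `ω` iff `z/ω` is
irrational. -/
theorem stmt9 (ω : ℝ) (hω : 0 < ω) (z : ℝ)
    (p : Polynomial ℤ) (hp : p.Monic) (hdeg : 1 ≤ p.natDegree) :
    (∀ f : ℝ → ℂ, Continuous f → (∀ x, f (x + ω) = f x) →
      Tendsto (fun N : ℕ => (∑ n ∈ Finset.range N, f (((p.eval (n : ℤ) : ℤ) : ℝ) * z)) / (N : ℂ))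
        atTop (nhds ((1 / (ω : ℂ)) * ∫ x in (0:ℝ)..ω, f x))) ↔
    Irrational (z / ω) := by
  haveI : Fact (0 < ω) := ⟨hω⟩
  have hωC : (ω:ℂ) ≠ 0 := by exact_mod_cast hω.ne'
  set s : ℕ → ℝ := fun n => ((p.eval (n:ℤ) : ℤ):ℝ) * z with hs
  constructor
  · -- equidistribution → irrational
    intro h
    by_contra hirr
    rw [Irrational] at hirr
    push_neg at hirr
    obtain ⟨r, hr⟩ := hirr
    set b : ℕ := r.den with hb
    have hbpos : 0 < b := r.pos
    set f : ℝ → ℂ := fun x => Complex.exp (2 * Real.pi * Complex.I * b * x / ω) with hf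
    have hcont : Continuous f := by
      rw [hf]; fun_prop
    have hper : ∀ x, f (x + ω) = f x := by
      intro x
      rw [hf]
      simp only []
      rw [show (2 * (Real.pi:ℂ) * Complex.I * b * (↑(x + ω)) / ω)
          = 2 * Real.pi * Complex.I * b * x / ω + b * (2 * Real.pi * Complex.I) by
        push_cast; field_simp]
      rw [Complex.exp_add]
      have : Complex.exp ((b:ℂ) * (2 * Real.pi * Complex.I)) = 1 := by
        have := Complex.exp_int_mul_two_pi_mul_I (b:ℤ)
        simpa using this
      rw [this, mul_one]
    have hlim := h f hcont hper
    -- f at sample points equals 1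
    have hval : ∀ n : ℕ, f (s n) = 1 := by
      intro n
      have hzr : z / ω = (r:ℝ) := hr.symm
      have hz : z = r * ω := by
        field_simp at hzr
        linarith [hzr]
      have hbr : ((b:ℝ)) * r = r.num := by
        rw [mul_comm]
        exact_mod_cast Rat.mul_den_eq_num r
      have hreal : (b:ℝ) * (s n) / ω = ((p.eval (n:ℤ) * r.num : ℤ) : ℝ) := by
        rw [hs]
        simp only []
        rw [hz]
        field_simp
        push_cast
        linear_combination (((p.eval (n:ℤ) : ℤ) : ℝ)) * hbr
      have harg : (2 * (Real.pi:ℂ) * Complex.I * b * ((s n : ℝ):ℂ) / ω)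
          = ((p.eval (n:ℤ) * r.num : ℤ):ℂ) * (2 * Real.pi * Complex.I) := by
        have hcast : ((((b:ℝ) * (s n) / ω) : ℝ) : ℂ) = ((p.eval (n:ℤ) * r.num : ℤ):ℂ) := by
          rw [hreal]
          push_cast
          ring
        rw [← hcast]
        push_cast
        ring
      rw [hf, hs]
      simp only []
      rw [show ((2 * (Real.pi:ℂ) * Complex.I * b * (((p.eval (n:ℤ) : ℤ):ℝ) * z : ℝ) / ω))
          = (2 * (Real.pi:ℂ) * Complex.I * b * ((s n : ℝ):ℂ) / ω) by rw [hs]]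
      rw [harg, Complex.exp_int_mul_two_pi_mul_I]
    have hone : Tendsto (fun N : ℕ => (∑ n ∈ Finset.range N, f (s n)) / (N : ℂ))
        atTop (nhds 1) := by
      have hFeq : (fun N : ℕ => (∑ n ∈ Finset.range N, f (s n)) / (N : ℂ))
          =ᶠ[atTop] fun _ => (1:ℂ) := by
        filter_upwards [eventually_ge_atTop 1] with N hN
        have hsum : (∑ n ∈ Finset.range N, f (s n)) = (N:ℂ) := by
          rw [Finset.sum_congr rfl fun n _ => hval n]
          simp
        simp only [hsum]
        rw [div_self (Nat.cast_ne_zero.2 (by omega))]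
      exact Tendsto.congr' hFeq.symm tendsto_const_nhds
    have hint : (∫ x in (0:ℝ)..ω, f x) = 0 := by
      rw [hf]
      have := char_integral ω hω (b:ℤ) (by exact_mod_cast hbpos.ne')
      rw [← this]
      refine intervalIntegral.integral_congr fun x _ => ?_
      push_cast
      ring_nf
    rw [hint, mul_zero] at hlim
    have : (1:ℂ) = 0 := tendsto_nhds_unique hone hlim
    exact one_ne_zero this
  · -- irrational → equidistribution
    intro hirr f hcont hper
    have hper' : Function.Periodic f ω := hper
    set g : C(AddCircle ω, ℂ) :=
      ⟨AddCircle.liftIco ω 0 f,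
        AddCircle.liftIco_continuous (by rw [zero_add]; have h0 := hper 0; rw [zero_add] at h0; exact h0.symm) hcont.continuousOn⟩ with hgdef
    have hgx : ∀ x : ℝ, g ((x : ℝ) : AddCircle ω) = f x := by
      intro x
      have h1 : ((toIcoMod hω 0 x : ℝ) : AddCircle ω) = (x : AddCircle ω) := by
        rw [show toIcoMod hω 0 x = x - toIcoDiv hω 0 x • ω from rfl]
        rw [QuotientAddGroup.mk_sub]
        have : ((toIcoDiv hω 0 x • ω : ℝ) : AddCircle ω) = 0 := by
          rw [AddCircle.coe_zsmul, AddCircle.coe_period, smul_zero]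
        rw [this, sub_zero]
      have h2 : g ((toIcoMod hω 0 x : ℝ) : AddCircle ω) = f (toIcoMod hω 0 x) :=
        AddCircle.liftIco_coe_apply (by simpa using toIcoMod_mem_Ico hω 0 x)
      have h3 : f (toIcoMod hω 0 x) = f x := by
        rw [show toIcoMod hω 0 x = x - toIcoDiv hω 0 x • ω from rfl]
        exact hper'.sub_zsmul_eq _
      rw [← h1, h2, h3]
    have hint : ∀ q : C(AddCircle ω, ℂ),
        IntervalIntegrable (fun x : ℝ => q ((x : ℝ) : AddCircle ω)) MeasureTheory.volume 0 ω :=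
      fun q => (q.continuous.comp (AddCircle.continuous_mk' ω)).intervalIntegrable _ _
    -- the span property
    have hL : ∀ q ∈ Submodule.span ℂ (Set.range (fourier (T := ω))),
        Tendsto (fun N : ℕ => (∑ n ∈ Finset.range N, (q : C(AddCircle ω, ℂ)) ((s n : ℝ) : AddCircle ω)) / (N:ℂ))
          atTop (nhds ((1/(ω:ℂ)) * ∫ x in (0:ℝ)..ω, (q : C(AddCircle ω, ℂ)) ((x : ℝ) : AddCircle ω))) := by
      intro q hq
      induction hq using Submodule.span_induction with
      | mem x hx =>
        obtain ⟨k, rfl⟩ := hx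
        rcases eq_or_ne k 0 with rfl | hk
        · -- constant character
          have hval : ∀ y : AddCircle ω, fourier (T := ω) 0 y = 1 := fun y => fourier_zero
          have hFeq : (fun N : ℕ => (∑ n ∈ Finset.range N, fourier (T := ω) 0 ((s n : ℝ) : AddCircle ω)) / (N:ℂ))
              =ᶠ[atTop] fun _ => (1:ℂ) := by
            filter_upwards [eventually_ge_atTop 1] with N hN
            simp only [hval]
            rw [Finset.sum_const, card_range, nsmul_eq_mul, mul_one,
              div_self (Nat.cast_ne_zero.2 (by omega))]
          have hI : (∫ x in (0:ℝ)..ω, fourier (T := ω) 0 ((x : ℝ) : AddCircle ω)) = (ω:ℂ) := by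
            simp only [hval]
            rw [intervalIntegral.integral_const]
            push_cast
            simp
          rw [hI]
          rw [one_div, inv_mul_cancel₀ hωC]
          exact Tendsto.congr' hFeq.symm tendsto_const_nhds
        · -- nonzero character
          have hval : ∀ x : ℝ, fourier (T := ω) k ((x : ℝ) : AddCircle ω)
              = Complex.exp (2 * Real.pi * Complex.I * k * x / ω) := fun x => fourier_coe_apply
          have hI : (∫ x in (0:ℝ)..ω, fourier (T := ω) k ((x : ℝ) : AddCircle ω)) = 0 := by
            simp only [hval]
            exact char_integral ω hω k hk
          rw [hI, mul_zero]
          have hCS := char_sum ω z hω hirr p hp hdeg k hk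
          apply Tendsto.congr _ hCS
          intro N
          congr 1
          refine Finset.sum_congr rfl fun n _ => ?_
          rw [hval]
          congr 1
          push_cast
          rw [hs]
          simp only []
          push_cast
          ring
      | zero =>
        simp only [ContinuousMap.zero_apply, Finset.sum_const_zero, zero_div,
          intervalIntegral.integral_zero, mul_zero]
        exact tendsto_const_nhds
      | add x y hx hy ihx ihy =>
        have := ihx.add ihy
        simp only [ContinuousMap.add_apply]
        rw [intervalIntegral.integral_add (hint x) (hint y), mul_add]
        apply Tendsto.congr _ this
        intro N
        rw [Finset.sum_add_distrib, add_div]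
      | smul c x hx ihx =>
        have h2 := ihx.const_mul c
        simp only [ContinuousMap.coe_smul, Pi.smul_apply, smul_eq_mul]
        rw [intervalIntegral.integral_const_mul]
        rw [show (1/(ω:ℂ)) * (c * ∫ x_1 in (0:ℝ)..ω, x ((x_1 : ℝ) : AddCircle ω))
            = c * ((1/(ω:ℂ)) * ∫ x_1 in (0:ℝ)..ω, x ((x_1:ℝ):AddCircle ω)) from by ring]
        apply Tendsto.congr _ h2
        intro N
        rw [← Finset.mul_sum, mul_div_assoc]
    -- rewrite f in terms of g
    have hsum_eq : (fun N : ℕ => (∑ n ∈ Finset.range N, f (((p.eval (n:ℤ) : ℤ):ℝ) * z)) / (N : ℂ))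
        = fun N : ℕ => (∑ n ∈ Finset.range N, g ((s n : ℝ) : AddCircle ω)) / (N : ℂ) := by
      funext N
      congr 1
      exact Finset.sum_congr rfl fun n _ => (hgx (s n)).symm
    have hint_eq : (∫ x in (0:ℝ)..ω, f x) = ∫ x in (0:ℝ)..ω, g ((x : ℝ) : AddCircle ω) :=
      intervalIntegral.integral_congr fun x _ => (hgx x).symm
    rw [hsum_eq, hint_eq]
    -- density argument
    rw [Metric.tendsto_atTop]
    intro ε hε
    have hg_cl : g ∈ closure ((Submodule.span ℂ (Set.range (fourier (T := ω)))) : Set C(AddCircle ω, ℂ)) := by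
      rw [← Submodule.topologicalClosure_coe, span_fourier_closure_eq_top]
      trivial
    obtain ⟨q, hqmem, hqdist⟩ := Metric.mem_closure_iff.1 hg_cl (ε/4) (by positivity)
    have hq := hL q hqmem
    rw [Metric.tendsto_atTop] at hq
    obtain ⟨N₀, hN₀⟩ := hq (ε/4) (by positivity)
    refine ⟨max N₀ 1, fun N hN => ?_⟩
    have hN1 : 1 ≤ N := le_trans (le_max_right _ _) hN
    have hNR : (0:ℝ) < N := by exact_mod_cast hN1
    have hqN := hN₀ N (le_trans (le_max_left _ _) hN)
    have hgq : ‖g - q‖ < ε/4 := by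
      rw [← dist_eq_norm]
      exact hqdist
    -- D1 : distance between sums
    have hD1 : dist ((∑ n ∈ Finset.range N, g ((s n : ℝ) : AddCircle ω)) / (N:ℂ))
        ((∑ n ∈ Finset.range N, q ((s n : ℝ) : AddCircle ω)) / (N:ℂ)) ≤ ‖g - q‖ := by
      rw [dist_eq_norm, div_sub_div_same, norm_div, Complex.norm_natCast]
      rw [← Finset.sum_sub_distrib]
      have hb : ‖∑ n ∈ Finset.range N, (g ((s n : ℝ) : AddCircle ω) - q ((s n : ℝ) : AddCircle ω))‖
          ≤ N * ‖g - q‖ := by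
        calc ‖∑ n ∈ Finset.range N, (g ((s n : ℝ) : AddCircle ω) - q ((s n : ℝ) : AddCircle ω))‖
            ≤ ∑ n ∈ Finset.range N, ‖g ((s n : ℝ) : AddCircle ω) - q ((s n : ℝ) : AddCircle ω)‖ :=
              norm_sum_le _ _
          _ ≤ ∑ _n ∈ Finset.range N, ‖g - q‖ := Finset.sum_le_sum fun n _ => by
              have := (g - q).norm_coe_le_norm ((s n : ℝ) : AddCircle ω)
              simpa using this
          _ = N * ‖g - q‖ := by rw [Finset.sum_const, card_range, nsmul_eq_mul]
      rw [div_le_iff₀ hNR]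
      exact hb.trans (le_of_eq (mul_comm _ _))
    have hD3 : dist ((1/(ω:ℂ)) * ∫ x in (0:ℝ)..ω, q ((x:ℝ):AddCircle ω))
        ((1/(ω:ℂ)) * ∫ x in (0:ℝ)..ω, g ((x:ℝ):AddCircle ω)) ≤ ‖q - g‖ := by
      rw [dist_eq_norm, ← mul_sub, norm_mul]
      rw [← intervalIntegral.integral_sub (hint q) (hint g)]
      have hnorm1 : ‖(1/(ω:ℂ))‖ = 1/ω := by
        rw [norm_div, norm_one, Complex.norm_real, Real.norm_eq_abs, abs_of_pos hω]
      have hbI : ‖∫ x in (0:ℝ)..ω, (q ((x:ℝ):AddCircle ω) - g ((x:ℝ):AddCircle ω))‖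
          ≤ ‖q - g‖ * |ω - 0| := by
        apply intervalIntegral.norm_integral_le_of_norm_le_const
        intro x hx
        have := (q - g).norm_coe_le_norm ((x:ℝ) : AddCircle ω)
        simpa using this
      calc ‖1/(ω:ℂ)‖ * ‖∫ x in (0:ℝ)..ω, (q ((x:ℝ):AddCircle ω) - g ((x:ℝ):AddCircle ω))‖
          ≤ (1/ω) * (‖q - g‖ * |ω - 0|) := by
            rw [hnorm1]
            exact mul_le_mul_of_nonneg_left hbI (by positivity)
        _ = ‖q - g‖ := by
            rw [sub_zero, abs_of_pos hω]
            field_simp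
    have hgq' : ‖q - g‖ < ε/4 := by rw [norm_sub_rev]; exact hgq
    have htri := dist_triangle4
      ((∑ n ∈ Finset.range N, g ((s n : ℝ) : AddCircle ω)) / (N:ℂ))
      ((∑ n ∈ Finset.range N, q ((s n : ℝ) : AddCircle ω)) / (N:ℂ))
      ((1/(ω:ℂ)) * (∫ x in (0:ℝ)..ω, q ((x:ℝ):AddCircle ω)))
      ((1/(ω:ℂ)) * (∫ x in (0:ℝ)..ω, g ((x:ℝ):AddCircle ω)))
    linarith [htri, hD1, hqN, hD3, hgq, hgq']

end
end

section
/- Let g : ℝ → ℝ be a function that is positive and strictly increasing on (0,∞), and such that x ↦ 1/g(x) is Lebesgue integrable on (0,∞). Then for every positive integer k: ∫₀^∞ sin(2πkx)/g(x) dx > 0. -/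
open Set MeasureTheory

private lemma period_split (F : ℝ → ℝ) (c T : ℝ)
    (h1 : IntervalIntegrable F volume c (c + T / 2))
    (h2 : IntervalIntegrable F volume (c + T / 2) (c + T)) :
    ∫ x in c..(c + T), F x = ∫ x in c..(c + T / 2), (F x + F (x + T / 2)) := by
  have h2' : IntervalIntegrable (fun x => F (x + T / 2)) volume c (c + T / 2) := by
    have := h2.comp_add_right (T / 2)
    have e1 : c + T / 2 - T / 2 = c := by ring
    have e2 : c + T - T / 2 = c + T / 2 := by ring
    rwa [e1, e2] at this
  rw [intervalIntegral.integral_add h1 h2']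
  rw [intervalIntegral.integral_comp_add_right F (T / 2)]
  have e2 : c + T / 2 + T / 2 = c + T := by ring
  rw [e2, intervalIntegral.integral_add_adjacent_intervals h1 h2]

/-- If `g` is positive and strictly increasing on `(0,∞)` and `1/g` is
Lebesgue integrable on `(0,∞)`, then `∫₀^∞ sin(2πkx)/g(x) dx > 0` for every positive
integer `k`. -/
theorem stmt13 (g : ℝ → ℝ)
    (hpos : ∀ x ∈ Ioi (0 : ℝ), 0 < g x)
    (hmono : StrictMonoOn g (Ioi (0 : ℝ)))
    (hint : IntegrableOn (fun x => 1 / g x) (Ioi (0 : ℝ)))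
    (k : ℕ) (hk : 0 < k) :
    0 < ∫ x in Ioi (0 : ℝ), Real.sin (2 * Real.pi * (k : ℝ) * x) / g x := by
  set π := Real.pi with hπdef
  have hπ : 0 < π := Real.pi_pos
  set K : ℝ := (k : ℝ) with hKdef
  have hK : 0 < K := by rw [hKdef]; exact_mod_cast hk
  set T : ℝ := 1 / K with hTdef
  have hT : 0 < T := by positivity
  have hKT : K * T = 1 := mul_one_div_cancel hK.ne'
  set F : ℝ → ℝ := fun x => Real.sin (2 * π * K * x) / g x with hFdef
  -- integrability of F on (0, ∞)
  have hFmul : F = fun x => Real.sin (2 * π * K * x) * (1 / g x) := by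
    funext x
    simp only [hFdef]
    rw [div_eq_mul_one_div]
  have hF_aesm : AEStronglyMeasurable F (volume.restrict (Ioi (0:ℝ))) := by
    rw [hFmul]
    have hc : Continuous fun x : ℝ => Real.sin (2 * π * K * x) :=
      Real.continuous_sin.comp (continuous_const.mul continuous_id)
    exact hc.aestronglyMeasurable.mul hint.aestronglyMeasurable
  have hF_int : IntegrableOn F (Ioi (0:ℝ)) := by
    refine (hint.abs).mono' hF_aesm (ae_of_all _ fun x => ?_)
    simp only [hFdef, Real.norm_eq_abs, abs_div, abs_one]
    exact div_le_div_of_nonneg_right (Real.abs_sin_le_one _) (abs_nonneg _)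
  -- interval integrability on subintervals of (0, ∞)
  have hF_ii : ∀ a b : ℝ, 0 ≤ a → a ≤ b → IntervalIntegrable F volume a b := by
    intro a b ha hab
    rw [intervalIntegrable_iff_integrableOn_Ioc_of_le hab]
    exact hF_int.mono_set (fun x hx => lt_of_le_of_lt ha hx.1)
  -- the decomposition of (0,∞)
  set s : ℕ → Set ℝ := fun n => Ioc ((n : ℝ) * T) (((n : ℝ) + 1) * T) with hsdef
  have hs_meas : ∀ n, MeasurableSet (s n) := fun n => measurableSet_Ioc
  have hs_disj : Pairwise (Function.onFun Disjoint s) := by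
    intro m n hmn
    simp only [Function.onFun, hsdef]
    rcases hmn.lt_or_gt with h | h
    · refine Set.Ioc_disjoint_Ioc.mpr ?_
      have hle : ((m:ℝ)+1)*T ≤ (n:ℝ)*T := by
        have : (m:ℝ)+1 ≤ (n:ℝ) := by exact_mod_cast h
        nlinarith
      exact (min_le_left _ _).trans (hle.trans (le_max_right _ _))
    · refine Set.Ioc_disjoint_Ioc.mpr ?_
      have hle : ((n:ℝ)+1)*T ≤ (m:ℝ)*T := by
        have : (n:ℝ)+1 ≤ (m:ℝ) := by exact_mod_cast h
        nlinarith
      exact (min_le_right _ _).trans (hle.trans (le_max_left _ _))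
  have h_union : (⋃ n, s n) = Ioi (0:ℝ) := by
    ext x
    simp only [mem_iUnion, hsdef, mem_Ioc, mem_Ioi]
    constructor
    · rintro ⟨n, h1, _⟩
      have : 0 ≤ (n : ℝ) * T := by positivity
      linarith
    · intro hx
      have hxT : 0 < x / T := by positivity
      have h1 : (1 : ℕ) ≤ ⌈x / T⌉₊ := Nat.one_le_ceil_iff.mpr hxT
      refine ⟨⌈x / T⌉₊ - 1, ?_, ?_⟩
      · have h2 : ((⌈x / T⌉₊ - 1 : ℕ) : ℝ) = (⌈x / T⌉₊ : ℝ) - 1 := by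
          push_cast [h1]; ring
        rw [h2]
        have h3 : (⌈x / T⌉₊ : ℝ) < x / T + 1 := Nat.ceil_lt_add_one hxT.le
        have h4 : (⌈x / T⌉₊ : ℝ) - 1 < x / T := by linarith
        have := (lt_div_iff₀ hT).mp h4
        linarith
      · have h2 : ((⌈x / T⌉₊ - 1 : ℕ) : ℝ) + 1 = (⌈x / T⌉₊ : ℝ) := by
          push_cast [h1]; ring
        rw [h2]
        exact (div_le_iff₀ hT).mp (Nat.le_ceil _)
  have hHasSum : HasSum (fun n => ∫ x in s n, F x) (∫ x in Ioi (0:ℝ), F x) := by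
    have := MeasureTheory.hasSum_integral_iUnion hs_meas hs_disj (h_union ▸ hF_int)
    rwa [h_union] at this
  -- rewrite each period integral
  have key : ∀ n : ℕ, ∫ x in s n, F x
      = ∫ x in ((n:ℝ)*T)..((n:ℝ)*T + T/2), (F x + F (x + T/2)) := by
    intro n
    have hc : (0:ℝ) ≤ (n:ℝ) * T := by positivity
    have h1 : IntervalIntegrable F volume ((n:ℝ)*T) ((n:ℝ)*T + T/2) :=
      hF_ii _ _ hc (by linarith)
    have h2 : IntervalIntegrable F volume ((n:ℝ)*T + T/2) ((n:ℝ)*T + T) :=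
      hF_ii _ _ (by linarith) (by linarith)
    have hIoc : ∫ x in s n, F x = ∫ x in ((n:ℝ)*T)..(((n:ℝ)+1)*T), F x := by
      rw [intervalIntegral.integral_of_le (by nlinarith : (n:ℝ)*T ≤ ((n:ℝ)+1)*T)]
    have he : ((n:ℝ)+1)*T = (n:ℝ)*T + T := by ring
    rw [hIoc, he, period_split F ((n:ℝ)*T) T h1 h2]
  -- the pointwise identity for the shifted sine
  have hsin_shift : ∀ x : ℝ, Real.sin (2 * π * K * (x + T/2)) = - Real.sin (2 * π * K * x) := by
    intro x
    have h : 2 * π * K * (x + T/2) = 2 * π * K * x + π := by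
      linear_combination π * hKT
    rw [h, Real.sin_add_pi]
  have hsum_eq : ∀ x : ℝ,
      F x + F (x + T/2) = Real.sin (2 * π * K * x) * (1 / g x - 1 / g (x + T/2)) := by
    intro x
    simp only [hFdef, hsin_shift x]
    rw [div_eq_mul_one_div, neg_div, div_eq_mul_one_div (Real.sin (2*π*K*x))]
    ring
  have hKn : ∀ n : ℕ, K * ((n:ℝ)*T) = (n:ℝ) := by
    intro n
    have : K * ((n:ℝ)*T) = (n:ℝ) * (K * T) := by ring
    rw [this, hKT, mul_one]
  -- sine sign on each half-period
  have hsin_nonneg : ∀ n : ℕ, ∀ x : ℝ, (n:ℝ)*T ≤ x → x ≤ (n:ℝ)*T + T/2 →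
      0 ≤ Real.sin (2 * π * K * x) := by
    intro n x h1 h2
    have hid : 2 * π * K * x = 2 * π * K * (x - (n:ℝ)*T) + (n:ℕ) * (2 * π) := by
      push_cast
      linear_combination 2 * π * hKn n
    rw [hid, Real.sin_add_nat_mul_two_pi]
    apply Real.sin_nonneg_of_nonneg_of_le_pi
    · have h0 : 0 ≤ x - (n:ℝ)*T := by linarith
      exact mul_nonneg (by positivity) h0
    · have h3 : x - (n:ℝ)*T ≤ T/2 := by linarith
      have h5 : 2 * π * K * (x - (n:ℝ)*T) ≤ 2 * π * K * (T/2) :=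
        mul_le_mul_of_nonneg_left h3 (by positivity)
      have h4 : 2 * π * K * (T/2) = π * (K * T) := by ring
      rw [h4, hKT, mul_one] at h5
      linarith
  -- nonnegativity of each period integral
  have h_nonneg : ∀ n : ℕ, 0 ≤ ∫ x in s n, F x := by
    intro n
    rw [key n]
    apply intervalIntegral.integral_nonneg (by linarith : (n:ℝ)*T ≤ (n:ℝ)*T + T/2)
    intro u hu
    rw [hsum_eq u]
    rcases eq_or_lt_of_le hu.1 with h | h
    · rw [← h]
      have hz : Real.sin (2 * π * K * ((n:ℝ)*T)) = 0 := by
        have hid : 2 * π * K * ((n:ℝ)*T) = 0 + (n:ℕ) * (2 * π) := by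
          push_cast
          linear_combination 2 * π * hKn n
        rw [hid, Real.sin_add_nat_mul_two_pi, Real.sin_zero]
      rw [hz, zero_mul]
    · have hu0 : (0:ℝ) < u := lt_of_le_of_lt (by positivity : (0:ℝ) ≤ (n:ℝ)*T) h
      have hu2 : (0:ℝ) < u + T/2 := by linarith
      have hglt : g u ≤ g (u + T/2) :=
        (hmono.le_iff_le (mem_Ioi.mpr hu0) (mem_Ioi.mpr hu2)).mpr (by linarith)
      have hgu : 0 < g u := hpos u (mem_Ioi.mpr hu0)
      have hdiff : 0 ≤ 1 / g u - 1 / g (u + T/2) := by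
        have := one_div_le_one_div_of_le hgu hglt
        linarith
      exact mul_nonneg (hsin_nonneg n u hu.1 hu.2) hdiff
  -- strict positivity of the first period integral
  have h_pos : 0 < ∫ x in s 0, F x := by
    rw [key 0]
    simp only [Nat.cast_zero, zero_mul, zero_add]
    apply intervalIntegral.intervalIntegral_pos_of_pos_on
    · have h1 : IntervalIntegrable F volume 0 (T/2) := hF_ii _ _ le_rfl (by linarith)
      have h2 : IntervalIntegrable (fun x => F (x + T/2)) volume 0 (T/2) := by
        have h2' : IntervalIntegrable F volume (T/2) T := hF_ii _ _ (by linarith) (by linarith)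
        have := h2'.comp_add_right (T/2)
        have e1 : T/2 - T/2 = (0:ℝ) := by ring
        have e2 : T - T/2 = T/2 := by ring
        rwa [e1, e2] at this
      exact h1.add h2
    · intro x hx
      rw [hsum_eq x]
      have hsinpos : 0 < Real.sin (2 * π * K * x) := by
        apply Real.sin_pos_of_pos_of_lt_pi
        · have := hx.1; positivity
        · have h5 : 2 * π * K * x < 2 * π * K * (T/2) :=
            mul_lt_mul_of_pos_left hx.2 (by positivity)
          have h4 : 2 * π * K * (T/2) = π * (K * T) := by ring
          rw [h4, hKT, mul_one] at h5
          linarith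
      have hx0 : (0:ℝ) < x := hx.1
      have hx2 : (0:ℝ) < x + T/2 := by linarith
      have hglt : g x < g (x + T/2) := hmono (mem_Ioi.mpr hx0) (mem_Ioi.mpr hx2) (by linarith)
      have hgx : 0 < g x := hpos x (mem_Ioi.mpr hx0)
      have hdiff : 0 < 1 / g x - 1 / g (x + T/2) := by
        have := one_div_lt_one_div_of_lt hgx hglt
        linarith
      exact mul_pos hsinpos hdiff
    · linarith
  -- conclude
  calc (0:ℝ) < ∑' n, ∫ x in s n, F x := Summable.tsum_pos hHasSum.summable h_nonneg 0 h_pos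
    _ = ∫ x in Ioi (0:ℝ), F x := hHasSum.tsum_eq
end

section
/- Let A, B ∈ ℝ with 4A³ + 27B² ≠ 0, let F(x) = x³ + Ax + B, let e be the largest real root of F (so F(e) = 0 and F(x) > 0 for all x > e), let y(x) = √(F(x)), and set ω = 2∫_e^∞ 1/y(x) dx (a finite positive number). Assume A ≥ 0 or √(|A|/3) < e (so that y is increasing on [e,∞)). If (x_n)_{n≥0} is a sequence in (e,∞) such that for every bounded continuous f : ℝ → ℂ, lim_{N→∞} (1/N) Σ_{n=0}^{N−1} f(x_n) = (2/ω) ∫_e^∞ f(x)/y(x) dx, then (x_n) is not equidistributed modulo 1 with respect to Lebesgue measure. -/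
open Filter Set MeasureTheory

set_option maxHeartbeats 1000000 in
/-- Let `F(x) = x³ + Ax + B` (with `4A³ + 27B² ≠ 0`), `e` its largest
real root, `y = √F`, `ω = 2∫_e^∞ dx/y`, and assume `A ≥ 0` or `√(|A|/3) < e` (so `y`
is increasing on `[e,∞)`). If `(x_n)` is a sequence in `(e,∞)` equidistributed with
respect to the measure `(2/ω)·(1/y)dx` (tested against all bounded continuous
`f : ℝ → ℂ`), then `(x_n)` is not equidistributed modulo 1 with respect to Lebesgue
measure. -/
theorem stmt14 (A B : ℝ) (hAB : 4 * A ^ 3 + 27 * B ^ 2 ≠ 0)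
    (F : ℝ → ℝ) (hF : ∀ t, F t = t ^ 3 + A * t + B)
    (e : ℝ) (he0 : F e = 0) (hepos : ∀ t, e < t → 0 < F t)
    (ω : ℝ) (hω : ω = 2 * ∫ t in Ioi e, 1 / Real.sqrt (F t))
    (hcase : 0 ≤ A ∨ Real.sqrt (|A| / 3) < e)
    (x : ℕ → ℝ) (hx : ∀ n, x n ∈ Ioi e)
    (hequi : ∀ f : ℝ → ℂ, Continuous f → (∃ C : ℝ, ∀ t, ‖f t‖ ≤ C) →
      Tendsto (fun N : ℕ => (∑ n ∈ Finset.range N, f (x n)) / (N : ℂ)) atTop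
        (nhds ((2 / (ω : ℂ)) * ∫ t in Ioi e, f t / (Real.sqrt (F t) : ℂ)))) :
    ¬ (∀ f : ℝ → ℂ, Continuous f → (∀ t, f (t + 1) = f t) →
      Tendsto (fun N : ℕ => (∑ n ∈ Finset.range N, f (x n)) / (N : ℂ)) atTop
        (nhds (∫ t in (0:ℝ)..1, f t))) := by
  intro hper
  have hπ : (0:ℝ) < Real.pi := Real.pi_pos
  -- ω is nonnegative
  have hω0 : 0 ≤ ω := by
    rw [hω]
    have : 0 ≤ ∫ t in Ioi e, 1 / Real.sqrt (F t) :=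
      integral_nonneg fun t => by positivity
    linarith
  -- ω ≠ 0, via the constant function 1
  have hωne : ω ≠ 0 := by
    intro h0
    have h1 := hequi (fun _ => 1) continuous_const ⟨1, fun t => by simp⟩
    have h2 : Tendsto (fun N : ℕ => (∑ _n ∈ Finset.range N, (1:ℂ)) / (N : ℂ)) atTop
        (nhds 1) := by
      have heq : ∀ᶠ N : ℕ in atTop,
          (1:ℂ) = (∑ _n ∈ Finset.range N, (1:ℂ)) / (N : ℂ) := by
        filter_upwards [eventually_ge_atTop 1] with N hN
        have hNne : (N:ℂ) ≠ 0 := by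
          exact_mod_cast Nat.cast_ne_zero.mpr (by omega)
        simp [Finset.sum_const, Finset.card_range, div_self hNne]
      exact Tendsto.congr' heq tendsto_const_nhds
    have := tendsto_nhds_unique h2 h1
    rw [h0] at this
    simp at this
  have hωpos : 0 < ω := lt_of_le_of_ne hω0 (Ne.symm hωne)
  -- constants
  set C : ℝ := (|e| + 1)^2 + |e| * (|e| + 1) + e^2 + |A| + 1 with hCdef
  have hC : 0 < C := by positivity
  set K : ℝ := 2 + 2*ω^2*C with hKdef
  have hK2 : 2 ≤ K := by nlinarith
  have hKpos : 0 < K := by linarith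
  set δ : ℝ := 1/(2*K*Real.pi) with hδdef
  have hδpos : 0 < δ := by positivity
  have hδ1 : δ ≤ 1 := by
    rw [hδdef]
    rw [div_le_one (by positivity)]
    nlinarith [mul_le_mul_of_nonneg_right hK2 hπ.le, Real.pi_gt_three]
  set a : ℝ := 1/(2*K) with hadef
  have hapos : 0 < a := by positivity
  have ha2 : a ≤ 1/2 := by
    rw [hadef, div_le_div_iff₀ (by positivity) (by norm_num)]
    linarith
  -- the test function
  set G : ℝ → ℝ := fun u => max 0 (1 - K * |Real.sin (Real.pi * u)|) with hGdef
  have hGcont : Continuous G := by fun_prop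
  have hG0 : ∀ u, 0 ≤ G u := fun u => le_max_left _ _
  have hG1 : ∀ u, G u ≤ 1 := by
    intro u
    have : 0 ≤ K * |Real.sin (Real.pi * u)| := by positivity
    simp only [hGdef]
    apply max_le <;> linarith
  have hGper : Function.Periodic G 1 := by
    intro u
    have : Real.pi * (u + 1) = Real.pi * u + Real.pi := by ring
    simp [hGdef, this, Real.sin_add_pi]
  have hGhalf : ∀ u ∈ Icc (0:ℝ) δ, 1/2 ≤ G u := by
    rintro u ⟨hu0, huδ⟩
    have hu1 : u ≤ 1 := le_trans huδ hδ1
    have hπu0 : 0 ≤ Real.pi * u := mul_nonneg hπ.le hu0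
    have hπu1 : Real.pi * u ≤ Real.pi := by nlinarith [hπ, hu1, hu0]
    have hs0 : 0 ≤ Real.sin (Real.pi * u) :=
      Real.sin_nonneg_of_nonneg_of_le_pi hπu0 hπu1
    have hs1 : Real.sin (Real.pi * u) ≤ Real.pi * u := Real.sin_le hπu0
    have habs : |Real.sin (Real.pi * u)| ≤ Real.pi * u := by
      rwa [abs_of_nonneg hs0]
    have hKδ : K * (Real.pi * δ) = 1/2 := by
      rw [hδdef]; field_simp
    have : K * |Real.sin (Real.pi * u)| ≤ 1/2 := by
      calc K * |Real.sin (Real.pi * u)| ≤ K * (Real.pi * u) := by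
            apply mul_le_mul_of_nonneg_left habs hKpos.le
        _ ≤ K * (Real.pi * δ) := by
            apply mul_le_mul_of_nonneg_left _ hKpos.le
            exact mul_le_mul_of_nonneg_left huδ hπ.le
        _ = 1/2 := hKδ
    simp only [hGdef]
    exact le_max_of_le_right (by linarith)
  have hGzero : ∀ u ∈ Icc a (1-a), G u = 0 := by
    have key : ∀ v : ℝ, a ≤ v → v ≤ 1/2 → 1 ≤ K * Real.sin (Real.pi * v) := by
      intro v hav hv2
      have hv0 : 0 ≤ v := le_trans hapos.le hav
      have h1 : 2 / Real.pi * (Real.pi * v) ≤ Real.sin (Real.pi * v) :=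
        Real.mul_le_sin (mul_nonneg hπ.le hv0) (by nlinarith [hπ, hv2, hv0])
      have h2 : 2 / Real.pi * (Real.pi * v) = 2 * v := by field_simp
      have h3 : 2 * v ≤ Real.sin (Real.pi * v) := by rw [h2] at h1; exact h1
      have h4 : 1 = K * (2 * a) := by rw [hadef]; field_simp
      calc (1:ℝ) = K * (2*a) := h4
        _ ≤ K * (2*v) := by
            apply mul_le_mul_of_nonneg_left (by linarith) hKpos.le
        _ ≤ K * Real.sin (Real.pi * v) :=
            mul_le_mul_of_nonneg_left h3 hKpos.le
    rintro u ⟨hau, hu1a⟩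
    have hu0 : 0 ≤ u := le_trans hapos.le hau
    have hu1 : u ≤ 1 := by linarith
    have hs0 : 0 ≤ Real.sin (Real.pi * u) :=
      Real.sin_nonneg_of_nonneg_of_le_pi (mul_nonneg hπ.le hu0)
        (by nlinarith [hπ, hu1, hu0])
    have h1 : 1 ≤ K * Real.sin (Real.pi * u) := by
      rcases le_total u (1/2) with hu | hu
      · exact key u hau hu
      · have : Real.sin (Real.pi * u) = Real.sin (Real.pi * (1-u)) := by
          rw [← Real.sin_pi_sub]; ring_nf
        rw [this]
        exact key (1-u) (by linarith) (by linarith)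
    simp only [hGdef]
    rw [abs_of_nonneg hs0]
    exact max_eq_left (by linarith)
  -- complex test function
  set fR : ℝ → ℝ := fun t => G (t - e) with hfRdef
  set f : ℝ → ℂ := fun t => (fR t : ℂ) with hfdef
  have hfcont : Continuous f := by fun_prop
  have hfper : ∀ t, f (t + 1) = f t := by
    intro t
    have : G (t + 1 - e) = G (t - e) := by
      have := hGper (t - e); rw [← this]; ring_nf
    simp [hfdef, hfRdef, this]
  have hfbdd : ∃ Cb : ℝ, ∀ t, ‖f t‖ ≤ Cb := by
    refine ⟨1, fun t => ?_⟩
    simp only [hfdef, Complex.norm_real, Real.norm_eq_abs]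
    rw [abs_of_nonneg (hG0 _)]
    exact hG1 _
  -- the key equality from uniqueness of limits
  have hkey : (∫ t in (0:ℝ)..1, f t)
      = 2/(ω:ℂ) * ∫ t in Ioi e, f t / (Real.sqrt (F t) : ℂ) :=
    tendsto_nhds_unique (hper f hfcont hfper) (hequi f hfcont hfbdd)
  -- LHS as a real integral
  have hLHS : (∫ t in (0:ℝ)..1, f t) = ((∫ u in (0:ℝ)..1, G u : ℝ) : ℂ) := by
    have h0 : (∫ t in (0:ℝ)..1, f t) = ((∫ t in (0:ℝ)..1, fR t : ℝ) : ℂ) := by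
      simp only [hfdef]
      exact intervalIntegral.integral_ofReal
    rw [h0]
    congr 1
    have h1 : (∫ t in (0:ℝ)..1, fR t) = ∫ u in (0-e)..(1-e), G u :=
      intervalIntegral.integral_comp_sub_right G e
    have h2 := hGper.intervalIntegral_add_eq (-e) 0
    rw [h1]
    rw [show (0:ℝ)-e = -e by ring, show (1:ℝ)-e = -e+1 by ring]
    rw [h2]
    norm_num
  set IG : ℝ := ∫ u in (0:ℝ)..1, G u with hIGdef
  have hGint : ∀ c d : ℝ, IntervalIntegrable G volume c d :=
    fun c d => hGcont.intervalIntegrable c d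
  -- lower bound for IG
  have hIGlow : δ/2 ≤ IG := by
    have hsplit : (∫ u in (0:ℝ)..δ, G u) + (∫ u in δ..1, G u) = IG :=
      intervalIntegral.integral_add_adjacent_intervals (hGint 0 δ) (hGint δ 1)
    have h1 : δ/2 ≤ ∫ u in (0:ℝ)..δ, G u := by
      have := intervalIntegral.integral_mono_on (μ := volume) hδpos.le
        (intervalIntegrable_const (c := (1/2 : ℝ))) (hGint 0 δ)
        (fun u hu => hGhalf u hu)
      simp at this; linarith
    have h2 : 0 ≤ ∫ u in δ..1, G u :=
      intervalIntegral.integral_nonneg hδ1 fun u _ => hG0 u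
    linarith
  -- upper bound for IG
  have hIGup : IG ≤ 2*a := by
    have hsplit : (∫ u in (0:ℝ)..a, G u) + (∫ u in a..(1-a), G u)
        + (∫ u in (1-a)..1, G u) = IG := by
      rw [intervalIntegral.integral_add_adjacent_intervals (hGint 0 a) (hGint a (1-a)),
        intervalIntegral.integral_add_adjacent_intervals (hGint 0 (1-a)) (hGint (1-a) 1)]
    have h1 : (∫ u in (0:ℝ)..a, G u) ≤ a := by
      have := intervalIntegral.integral_mono_on (μ := volume) hapos.le
        (hGint 0 a) (intervalIntegrable_const (c := (1:ℝ)))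
        (fun u _ => hG1 u)
      simpa using this
    have h2 : (∫ u in a..(1-a), G u) = 0 := by
      rw [intervalIntegral.integral_congr (g := fun _ => (0:ℝ))]
      · simp
      · intro u hu
        rw [Set.uIcc_of_le (by linarith)] at hu
        exact hGzero u hu
    have h3 : (∫ u in (1-a)..1, G u) ≤ a := by
      have := intervalIntegral.integral_mono_on (μ := volume) (by linarith : 1-a ≤ 1)
        (hGint (1-a) 1) (intervalIntegrable_const (c := (1:ℝ)))
        (fun u _ => hG1 u)
      simpa using this
    linarith
  -- relate complex integrand to real integrand
  have hfc : ∀ t, f t / ((Real.sqrt (F t) : ℝ) : ℂ) = ((fR t / Real.sqrt (F t) : ℝ) : ℂ) := by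
    intro t; simp [hfdef, Complex.ofReal_div]
  by_cases hInt : IntegrableOn (fun t => fR t / Real.sqrt (F t)) (Ioi e) volume
  · -- integrable case
    set I : ℝ := ∫ t in Ioi e, fR t / Real.sqrt (F t) with hIdef
    have hRHS : (∫ t in Ioi e, f t / (Real.sqrt (F t) : ℂ)) = (I : ℂ) := by
      rw [show (fun t => f t / ((Real.sqrt (F t):ℝ) : ℂ))
          = fun t => ((fR t / Real.sqrt (F t) : ℝ) : ℂ) from funext hfc]
      exact integral_ofReal
    have hkeyR : IG = 2/ω * I := by
      have : ((IG:ℝ):ℂ) = ((2/ω * I : ℝ) : ℂ) := by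
        rw [← hLHS, hkey, hRHS]; push_cast; ring
      exact_mod_cast this
    -- lower bound for I
    -- factorization of F
    have hB : B = -(e^3) - A*e := by
      have := he0; rw [hF] at this; linarith
    have hFfac : ∀ t, F t = (t - e) * (t^2 + e*t + e^2 + A) := by
      intro t; rw [hF, hB]; ring
    have hFle : ∀ t ∈ Ioc e (e+1), F t ≤ C * (t - e) := by
      rintro t ⟨ht1, ht2⟩
      rw [hFfac]
      have htabs : |t| ≤ |e| + 1 := by
        rw [abs_le] at *
        constructor <;> nlinarith [neg_abs_le e, le_abs_self e]
      have hg : t^2 + e*t + e^2 + A ≤ C := by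
        rw [hCdef]
        nlinarith [neg_abs_le e, le_abs_self e, le_abs_self A, neg_abs_le A,
          abs_nonneg e, abs_nonneg t, sq_abs t, neg_abs_le t, le_abs_self t,
          mul_le_mul_of_nonneg_left htabs (abs_nonneg e), abs_mul e t,
          le_abs_self (e*t), abs_nonneg (e*t)]
      nlinarith
    -- minorant
    set m : ℝ → ℝ := fun t => (1/(2*Real.sqrt C)) * (t - e) ^ (-(1/2) : ℝ) with hmdef
    have hm_ii : IntervalIntegrable m volume e (e+δ) := by
      have h0 : IntervalIntegrable (fun u : ℝ => u ^ (-(1/2):ℝ)) volume 0 δ :=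
        intervalIntegral.intervalIntegrable_rpow' (by norm_num)
      have h1 : IntervalIntegrable (fun t : ℝ => (t - e) ^ (-(1/2):ℝ)) volume (0+e) (δ+e) :=
        h0.comp_sub_right e
      have h2 : IntervalIntegrable (fun t : ℝ => (t - e) ^ (-(1/2):ℝ)) volume e (e+δ) := by
        rw [show (0:ℝ)+e = e by ring, show δ+e = e+δ by ring] at h1
        exact h1
      simpa [hmdef] using h2.const_mul (1/(2*Real.sqrt C))
    have hm_int : IntegrableOn m (Ioc e (e+δ)) volume := by
      rw [← intervalIntegrable_iff_integrableOn_Ioc_of_le (by linarith)]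
      exact hm_ii
    have hm_val : (∫ t in e..(e+δ), m t) = Real.sqrt δ / Real.sqrt C := by
      rw [hmdef]
      rw [intervalIntegral.integral_const_mul]
      have h1 : (∫ t in e..(e+δ), (t - e) ^ (-(1/2):ℝ))
          = ∫ u in (e-e)..(e+δ-e), u ^ (-(1/2):ℝ) :=
        intervalIntegral.integral_comp_sub_right (fun u : ℝ => u ^ (-(1/2):ℝ)) e
      rw [h1, show e-e = (0:ℝ) by ring, show e+δ-e = δ by ring]
      rw [integral_rpow (Or.inl (by norm_num))]
      have : -(1/2) + 1 = (1/2:ℝ) := by norm_num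
      rw [this, Real.zero_rpow (by norm_num), ← Real.sqrt_eq_rpow]
      have hsC : 0 < Real.sqrt C := Real.sqrt_pos.mpr hC
      field_simp
      ring
    -- pointwise bound on Ioc e (e+δ)
    have hpw : ∀ t ∈ Ioc e (e+δ), m t ≤ fR t / Real.sqrt (F t) := by
      rintro t ⟨ht1, ht2⟩
      have hte : 0 < t - e := by linarith
      have hFt : 0 < F t := hepos t ht1
      have hsF : 0 < Real.sqrt (F t) := Real.sqrt_pos.mpr hFt
      have hfR : 1/2 ≤ fR t := hGhalf (t-e) ⟨hte.le, by linarith⟩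
      have hFle' : Real.sqrt (F t) ≤ Real.sqrt C * Real.sqrt (t - e) := by
        rw [← Real.sqrt_mul hC.le]
        exact Real.sqrt_le_sqrt (hFle t ⟨ht1, by linarith⟩)
      have hmt : m t = (1/2) / (Real.sqrt C * Real.sqrt (t-e)) := by
        simp only [hmdef]
        rw [Real.rpow_neg hte.le, ← Real.sqrt_eq_rpow]
        have h1 : 0 < Real.sqrt C := Real.sqrt_pos.mpr hC
        have h2 : 0 < Real.sqrt (t-e) := Real.sqrt_pos.mpr hte
        field_simp
      rw [hmt]
      exact div_le_div₀ (by linarith [hG0 (t-e)]) hfR hsF hFle'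
    -- chain of inequalities
    have hstep1 : (∫ t in Ioc e (e+δ), m t) ≤ ∫ t in Ioc e (e+δ), fR t / Real.sqrt (F t) :=
      setIntegral_mono_on hm_int (hInt.mono_set Ioc_subset_Ioi_self)
        measurableSet_Ioc hpw
    have hstep2 : (∫ t in Ioc e (e+δ), fR t / Real.sqrt (F t)) ≤ I := by
      apply setIntegral_mono_set hInt
      · exact Eventually.of_forall fun t => by positivity
      · exact HasSubset.Subset.eventuallyLE Ioc_subset_Ioi_self
    have hstep0 : (∫ t in Ioc e (e+δ), m t) = Real.sqrt δ / Real.sqrt C := by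
      rw [← hm_val, intervalIntegral.integral_of_le (by linarith)]
    have hIlow : Real.sqrt δ / Real.sqrt C ≤ I := by
      rw [← hstep0]; exact le_trans hstep1 hstep2
    -- final contradiction
    have hsC : 0 < Real.sqrt C := Real.sqrt_pos.mpr hC
    have hsδ : 0 < Real.sqrt δ := Real.sqrt_pos.mpr hδpos
    have hub : 2/ω * (Real.sqrt δ / Real.sqrt C) ≤ 2*a := by
      calc 2/ω * (Real.sqrt δ / Real.sqrt C) ≤ 2/ω * I := by
            apply mul_le_mul_of_nonneg_left hIlow (by positivity)
        _ = IG := hkeyR.symm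
        _ ≤ 2*a := hIGup
    -- derive 2*K*√δ ≤ ω*√C  (since 2a = 1/K)
    have h2a : 2*a = 1/K := by rw [hadef]; field_simp
    have hub2 : 2*K*Real.sqrt δ ≤ ω * Real.sqrt C := by
      rw [h2a] at hub
      have h3 : 2 * Real.sqrt δ / (ω * Real.sqrt C) ≤ 1/K := by
        calc 2 * Real.sqrt δ / (ω * Real.sqrt C) = 2/ω * (Real.sqrt δ / Real.sqrt C) := by
              field_simp
          _ ≤ 1/K := hub
      rw [div_le_div_iff₀ (by positivity) hKpos] at h3
      linarith
    have hsq : 4*K^2*δ ≤ ω^2*C := by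
      have hmm := mul_self_le_mul_self (by positivity : (0:ℝ) ≤ 2*K*Real.sqrt δ) hub2
      have e1 : Real.sqrt δ * Real.sqrt δ = δ := Real.mul_self_sqrt hδpos.le
      have e2 : Real.sqrt C * Real.sqrt C = C := Real.mul_self_sqrt hC.le
      nlinarith
    -- but 4K²δ = 2K/π and ω²C < 2K/π·? contradiction
    have hδval : 4*K^2*δ = 2*K/Real.pi := by
      rw [hδdef]; field_simp; ring
    rw [hδval] at hsq
    -- 2K/π ≤ ω²C, i.e. 2K ≤ π ω² C < 4 ω² C ≤ 2K - 4, contradiction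
    have hπ4 : Real.pi ≤ 4 := Real.pi_le_four
    have hωC : 0 < ω^2*C := by positivity
    have : 2*K ≤ Real.pi * (ω^2*C) := by
      rw [div_le_iff₀ hπ] at hsq; linarith
    nlinarith
  · -- non-integrable case : the set integral is 0
    have hnc : ¬ Integrable (fun t => f t / (Real.sqrt (F t) : ℂ)) (volume.restrict (Ioi e)) := by
      intro h
      apply hInt
      have h2 : Integrable (fun t => ((fR t / Real.sqrt (F t) : ℝ) : ℂ))
          (volume.restrict (Ioi e)) := by
        rwa [show (fun t => ((fR t / Real.sqrt (F t) : ℝ) : ℂ))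
          = fun t => f t / ((Real.sqrt (F t):ℝ) : ℂ) from funext fun t => (hfc t).symm]
      have h3 := h2.re
      simp at h3; exact h3
    have h0 : (∫ t in Ioi e, f t / (Real.sqrt (F t) : ℂ)) = 0 := integral_undef hnc
    rw [h0, mul_zero, hLHS] at hkey
    have : IG = 0 := by exact_mod_cast hkey
    linarith
end

section
/- Let A, B ∈ ℝ and suppose the cubic F(x) = x³ + Ax + B has three distinct real roots e₁ > e₂ > e₃. Let e = e₁, let y(x) = √(F(x)) for x ≥ e, and set ω = 2∫_e^∞ 1/y(x) dx (a finite positive number). If (x_n)_{n≥0} is a sequence in (e,∞) such that for every bounded continuous f : ℝ → ℂ, lim_{N→∞} (1/N) Σ_{n=0}^{N−1} f(x_n) = (2/ω) ∫_e^∞ f(x)/y(x) dx, then (x_n) is not equidistributed modulo 1 with respect to Lebesgue measure. -/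
open Filter Set MeasureTheory

set_option maxHeartbeats 1000000 in
/-- Suppose the cubic `F(x) = x³ + Ax + B` has three distinct real
roots `e₁ > e₂ > e₃`, let `e = e₁`, `y = √F` on `[e,∞)`, and `ω = 2∫_e^∞ dx/y`.
If `(x_n)` is a sequence in `(e,∞)` equidistributed with respect to the measure
`(2/ω)·(1/y)dx` (tested against all bounded continuous `f : ℝ → ℂ`), then `(x_n)`
is not equidistributed modulo 1 with respect to Lebesgue measure. -/
theorem stmt15 (A B : ℝ)
    (F : ℝ → ℝ) (hF : ∀ t, F t = t ^ 3 + A * t + B)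
    (e₁ e₂ e₃ : ℝ) (h12 : e₂ < e₁) (h23 : e₃ < e₂)
    (hr1 : F e₁ = 0) (hr2 : F e₂ = 0) (hr3 : F e₃ = 0)
    (ω : ℝ) (hω : ω = 2 * ∫ t in Ioi e₁, 1 / Real.sqrt (F t))
    (x : ℕ → ℝ) (hx : ∀ n, x n ∈ Ioi e₁)
    (hequi : ∀ f : ℝ → ℂ, Continuous f → (∃ C : ℝ, ∀ t, ‖f t‖ ≤ C) →
      Tendsto (fun N : ℕ => (∑ n ∈ Finset.range N, f (x n)) / (N : ℂ)) atTop
        (nhds ((2 / (ω : ℂ)) * ∫ t in Ioi e₁, f t / (Real.sqrt (F t) : ℂ)))) :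
    ¬ (∀ f : ℝ → ℂ, Continuous f → (∀ t, f (t + 1) = f t) →
      Tendsto (fun N : ℕ => (∑ n ∈ Finset.range N, f (x n)) / (N : ℂ)) atTop
        (nhds (∫ t in (0:ℝ)..1, f t))) := by
  intro H
  have π := Real.pi  -- dummy
  clear π
  ---- Part 1: factorization of the cubic
  have hfac : ∀ t, F t = (t - e₁) * (t - e₂) * (t - e₃) := by
    have E1 : e₁ ^ 3 + A * e₁ + B = 0 := by rw [← hF]; exact hr1
    have E2 : e₂ ^ 3 + A * e₂ + B = 0 := by rw [← hF]; exact hr2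
    have E3 : e₃ ^ 3 + A * e₃ + B = 0 := by rw [← hF]; exact hr3
    have h12' : e₁ - e₂ ≠ 0 := sub_ne_zero.mpr (ne_of_gt h12)
    have h23' : e₂ - e₃ ≠ 0 := sub_ne_zero.mpr (ne_of_gt h23)
    have h13' : e₁ - e₃ ≠ 0 := sub_ne_zero.mpr (ne_of_gt (h23.trans h12))
    have P12 : e₁ ^ 2 + e₁ * e₂ + e₂ ^ 2 + A = 0 := by
      have h : (e₁ - e₂) * (e₁ ^ 2 + e₁ * e₂ + e₂ ^ 2 + A) = 0 := by linear_combination E1 - E2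
      exact (mul_eq_zero.mp h).resolve_left h12'
    have P23 : e₂ ^ 2 + e₂ * e₃ + e₃ ^ 2 + A = 0 := by
      have h : (e₂ - e₃) * (e₂ ^ 2 + e₂ * e₃ + e₃ ^ 2 + A) = 0 := by linear_combination E2 - E3
      exact (mul_eq_zero.mp h).resolve_left h23'
    have s0 : e₁ + e₂ + e₃ = 0 := by
      have h : (e₁ - e₃) * (e₁ + e₂ + e₃) = 0 := by linear_combination P12 - P23
      exact (mul_eq_zero.mp h).resolve_left h13'
    have hA : A = e₁ * e₂ + e₁ * e₃ + e₂ * e₃ := by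
      linear_combination P12 - (e₁ + e₂) * s0
    have hB : B = -(e₁ * e₂ * e₃) := by
      linear_combination E1 - e₁ * hA - e₁ ^ 2 * s0
    intro t
    rw [hF]
    linear_combination t * hA + hB + t ^ 2 * s0
  have h13 : e₃ < e₁ := h23.trans h12
  have hFc : Continuous F := by
    have hFeq : F = fun t => t ^ 3 + A * t + B := funext hF
    rw [hFeq]
    exact ((continuous_pow 3).add (continuous_const.mul continuous_id)).add continuous_const
  have hFpos : ∀ t, e₁ < t → 0 < F t := by
    intro t ht
    rw [hfac]
    have h1 : (0:ℝ) < t - e₁ := by linarith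
    have h2 : (0:ℝ) < t - e₂ := by linarith
    have h3 : (0:ℝ) < t - e₃ := by linarith
    positivity
  ---- Part 2: integrability of 1/√F on (e₁, ∞)
  have hmeas : ∀ s : Set ℝ, AEStronglyMeasurable (fun t => 1 / Real.sqrt (F t))
      (volume.restrict s) :=
    fun s => (measurable_const.div
      (Real.continuous_sqrt.measurable.comp hFc.measurable)).aestronglyMeasurable.restrict
  have hrpow_eq : ∀ u : ℝ, 0 < u → u ^ (-(1/2) : ℝ) = 1 / Real.sqrt u := by
    intro u hu
    rw [Real.rpow_neg hu.le, ← Real.sqrt_eq_rpow, one_div]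
  have hm : (0:ℝ) < (e₁ - e₂) * (e₁ - e₃) := by nlinarith
  have hdom0 : IntegrableOn (fun x : ℝ => (x - e₁) ^ (-(1/2) : ℝ)) (Ioc e₁ (e₁ + 1)) := by
    have h0 : IntervalIntegrable (fun x : ℝ => x ^ (-(1/2) : ℝ)) volume 0 1 :=
      intervalIntegral.intervalIntegrable_rpow' (by norm_num)
    have h1 : IntervalIntegrable (fun x : ℝ => (x - e₁) ^ (-(1/2) : ℝ)) volume (0 + e₁) (1 + e₁) :=
      h0.comp_sub_right e₁ enorm_ne_top
    rw [intervalIntegrable_iff_integrableOn_Ioc_of_le (by linarith)] at h1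
    have ha : (0:ℝ) + e₁ = e₁ := by ring
    have hb : (1:ℝ) + e₁ = e₁ + 1 := by ring
    rwa [ha, hb] at h1
  have hdom1 : IntegrableOn (fun t => (1 / Real.sqrt ((e₁ - e₂) * (e₁ - e₃))) *
      (1 / Real.sqrt (t - e₁))) (Ioc e₁ (e₁ + 1)) := by
    have h3 : IntegrableOn (fun x : ℝ => (1 / Real.sqrt ((e₁ - e₂) * (e₁ - e₃))) *
        (x - e₁) ^ (-(1/2) : ℝ)) (Ioc e₁ (e₁ + 1)) := hdom0.const_mul _
    exact h3.congr_fun (fun t ht => by beta_reduce; rw [hrpow_eq _ (by linarith [ht.1] : (0:ℝ) < t - e₁)])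
      measurableSet_Ioc
  have hint1 : IntegrableOn (fun t => 1 / Real.sqrt (F t)) (Ioc e₁ (e₁ + 1)) := by
    refine Integrable.mono' hdom1 (hmeas _) ?_
    rw [ae_restrict_iff' measurableSet_Ioc]
    filter_upwards with t ht
    have h1 : (0:ℝ) < t - e₁ := by linarith [ht.1]
    have hFt : 0 < F t := hFpos t ht.1
    rw [Real.norm_eq_abs, abs_of_nonneg (by positivity)]
    rw [div_mul_div_comm, one_mul, ← Real.sqrt_mul hm.le]
    apply one_div_le_one_div_of_le
    · exact Real.sqrt_pos.mpr (by nlinarith [ht.1, ht.2])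
    · apply Real.sqrt_le_sqrt
      rw [hfac]
      have key : (e₁ - e₂) * (e₁ - e₃) ≤ (t - e₂) * (t - e₃) :=
        mul_le_mul (by linarith [ht.1]) (by linarith [ht.1]) (by linarith) (by linarith [ht.1])
      nlinarith [key, h1]
  have hdom2 : IntegrableOn (fun t : ℝ => (t - e₁) ^ (-(3/2) : ℝ)) (Ioi (e₁ + 1)) := by
    have base : IntegrableOn (fun x : ℝ => x ^ (-(3/2) : ℝ)) (Ioi 1) :=
      integrableOn_Ioi_rpow_of_lt (by norm_num) one_pos
    have hmp := (measurePreserving_add_right volume (-e₁)).integrableOn_comp_preimage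
      (Homeomorph.addRight (-e₁)).measurableEmbedding (f := fun x : ℝ => x ^ (-(3/2) : ℝ))
      (s := Ioi (1:ℝ))
    have h1 := hmp.mpr base
    have hpre : ((fun x : ℝ => x + -e₁) ⁻¹' Ioi (1:ℝ)) = Ioi (e₁ + 1) := by
      ext z; simp [mem_Ioi]; constructor <;> intro h <;> linarith
    rw [hpre] at h1
    exact h1.congr_fun (fun t ht => by norm_num [sub_eq_add_neg]) measurableSet_Ioi
  have hint2 : IntegrableOn (fun t => 1 / Real.sqrt (F t)) (Ioi (e₁ + 1)) := by
    refine Integrable.mono' hdom2 (hmeas _) ?_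
    rw [ae_restrict_iff' measurableSet_Ioi]
    filter_upwards with t ht
    rw [mem_Ioi] at ht
    have h1 : (1:ℝ) < t - e₁ := by linarith
    have h0 : (0:ℝ) < t - e₁ := by linarith
    have hFt : 0 < F t := hFpos t (by linarith)
    rw [Real.norm_eq_abs, abs_of_nonneg (by positivity)]
    have hcube : ((t - e₁) ^ 3 : ℝ) ≤ F t := by
      rw [hfac]
      have key : (t - e₁) * (t - e₁) ≤ (t - e₂) * (t - e₃) :=
        mul_le_mul (by linarith) (by linarith) (by linarith) (by linarith)
      nlinarith [key, h0]
    have hrw : (t - e₁) ^ (-(3/2) : ℝ) = 1 / Real.sqrt ((t - e₁) ^ 3) := by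
      rw [Real.rpow_neg h0.le, one_div, Real.sqrt_eq_rpow, ← Real.rpow_natCast (t - e₁) 3,
        ← Real.rpow_mul h0.le]
      norm_num
    rw [hrw]
    apply one_div_le_one_div_of_le
    · exact Real.sqrt_pos.mpr (by positivity)
    · exact Real.sqrt_le_sqrt hcube
  have hunion : Ioc e₁ (e₁ + 1) ∪ Ioi (e₁ + 1) = Ioi e₁ := Ioc_union_Ioi_eq_Ioi (by linarith)
  have hint : IntegrableOn (fun t => 1 / Real.sqrt (F t)) (Ioi e₁) := by
    rw [← hunion]; exact hint1.union hint2
  ---- Part 3: positivity of ω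
  have hI0pos : 0 < ∫ t in Ioi e₁, 1 / Real.sqrt (F t) := by
    rw [setIntegral_pos_iff_support_of_nonneg_ae
      (Eventually.of_forall (fun t => by positivity)) hint]
    have hsub : Ioi e₁ ⊆ Function.support (fun t => 1 / Real.sqrt (F t)) ∩ Ioi e₁ := by
      intro t ht
      refine ⟨?_, ht⟩
      have := hFpos t ht
      simp only [Function.mem_support]
      positivity
    calc (0 : ENNReal) < volume (Ioi e₁) := by rw [Real.volume_Ioi]; exact ENNReal.zero_lt_top
      _ ≤ volume (Function.support (fun t => 1 / Real.sqrt (F t)) ∩ Ioi e₁) :=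
        measure_mono hsub
  have hωpos : 0 < ω := by rw [hω]; linarith
  ---- Part 4: the bump function
  set M : ℝ := (e₁ + 1 - e₂) * (e₁ + 1 - e₃) with hM
  have hMpos : 0 < M := by rw [hM]; nlinarith
  have hsMpos : 0 < Real.sqrt M := Real.sqrt_pos.mpr hMpos
  set c : ℝ := ω * Real.sqrt (2 * Real.pi) * Real.sqrt M with hcdef
  have hcpos : 0 < c := by
    rw [hcdef]
    have : (0:ℝ) < Real.sqrt (2 * Real.pi) := Real.sqrt_pos.mpr (by positivity)
    positivity
  set q : ℝ := 1 + c with hqdef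
  have hq : (1:ℝ) ≤ q := by rw [hqdef]; linarith
  have hq0 : (0:ℝ) < q := by linarith
  set δ' : ℝ := 1 / (2 * Real.pi * q ^ 2) with hδ'
  set δ : ℝ := 1 / (2 * Real.sqrt 2 * q ^ 2) with hδ
  set g : ℝ → ℝ := fun t => max 0 (1 - q ^ 4 * (1 - Real.cos (2 * Real.pi * (t - e₁)))) with hg
  clear_value M c q δ' δ g
  have hπ := Real.pi_gt_three
  have hs2 : (1:ℝ) ≤ Real.sqrt 2 := by
    rw [show (1:ℝ) = Real.sqrt 1 by simp]
    exact Real.sqrt_le_sqrt (by norm_num)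
  have hq2 : (1:ℝ) ≤ q ^ 2 := by nlinarith [hq, sq_nonneg (q - 1)]
  have hδ'pos : 0 < δ' := by rw [hδ']; positivity
  have hδpos : 0 < δ := by rw [hδ]; positivity
  have hδ'val : 2 * Real.pi * q ^ 2 * δ' = 1 := by rw [hδ']; field_simp
  have hδval : 2 * Real.sqrt 2 * q ^ 2 * δ = 1 := by rw [hδ]; field_simp
  have hδ8 : 8 * q ^ 4 * δ ^ 2 = 1 := by
    have e2 : (2 * Real.sqrt 2 * q ^ 2) ^ 2 = 8 * q ^ 4 := by
      rw [mul_pow, mul_pow, Real.sq_sqrt (by norm_num : (0:ℝ) ≤ 2)]; ring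
    have h2 : (2 * Real.sqrt 2 * q ^ 2 * δ) ^ 2 = 1 := by rw [hδval]; norm_num
    rw [mul_pow, e2] at h2
    linarith
  have hδ'le : δ' ≤ 1 := by
    rw [hδ', div_le_one (by positivity)]
    have h5 : (1:ℝ) * 1 ≤ (2 * Real.pi) * q ^ 2 :=
      mul_le_mul (by linarith) hq2 (by norm_num) (by positivity)
    linarith
  have hδle : δ ≤ 1 / 2 := by
    rw [hδ, div_le_div_iff₀ (by positivity) (by norm_num)]
    have h5 : (1:ℝ) * 1 ≤ Real.sqrt 2 * q ^ 2 :=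
      mul_le_mul hs2 hq2 (by norm_num) (by positivity)
    nlinarith [h5]
  have hg0 : ∀ t, 0 ≤ g t := fun t => by rw [hg]; exact le_max_left _ _
  have hg1 : ∀ t, g t ≤ 1 := by
    intro t
    rw [hg]
    apply max_le (by norm_num)
    have h1 : 0 ≤ 1 - Real.cos (2 * Real.pi * (t - e₁)) := by
      linarith [Real.cos_le_one (2 * Real.pi * (t - e₁))]
    have h2 : (0:ℝ) ≤ q ^ 4 := by positivity
    nlinarith [mul_nonneg h2 h1]
  have hgcont : Continuous g := by
    rw [hg]
    exact continuous_const.max (continuous_const.sub (continuous_const.mul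
      (continuous_const.sub (Real.continuous_cos.comp
        (continuous_const.mul (continuous_id.sub continuous_const))))))
  have hgper : ∀ t, g (t + 1) = g t := by
    intro t
    simp only [hg]
    congr 2
    have h2 : 2 * Real.pi * (t + 1 - e₁) = 2 * Real.pi * (t - e₁) + 2 * Real.pi := by ring
    rw [h2, Real.cos_add_two_pi]
  have hghalf : ∀ t ∈ Icc e₁ (e₁ + δ'), 1/2 ≤ g t := by
    intro t ht
    have h1 : 0 ≤ t - e₁ := by linarith [ht.1]
    have h2 : t - e₁ ≤ δ' := by linarith [ht.2]
    have step : 2 * Real.pi * q ^ 2 * (t - e₁) ≤ 1 := by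
      have h3 := mul_le_mul_of_nonneg_left h2
        (show (0:ℝ) ≤ 2 * Real.pi * q ^ 2 by positivity)
      rw [hδ'val] at h3
      linarith
    have hb0 : 0 ≤ 2 * Real.pi * q ^ 2 * (t - e₁) := by positivity
    have hsq1 : (2 * Real.pi * q ^ 2 * (t - e₁)) ^ 2 ≤ 1 := by nlinarith
    have hcos := Real.one_sub_sq_div_two_le_cos (x := 2 * Real.pi * (t - e₁))
    have m1 : q ^ 4 * (1 - Real.cos (2 * Real.pi * (t - e₁))) ≤
        q ^ 4 * ((2 * Real.pi * (t - e₁)) ^ 2 / 2) :=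
      mul_le_mul_of_nonneg_left (by linarith) (by positivity)
    have m2 : q ^ 4 * ((2 * Real.pi * (t - e₁)) ^ 2 / 2) =
        (2 * Real.pi * q ^ 2 * (t - e₁)) ^ 2 / 2 := by ring
    have m3 : q ^ 4 * (1 - Real.cos (2 * Real.pi * (t - e₁))) ≤ 1 / 2 := by
      nlinarith [m1, m2, hsq1]
    rw [hg]
    exact le_trans (by linarith) (le_max_right _ _)
  have hgzero : ∀ t : ℝ, δ ≤ |t - e₁| → |t - e₁| ≤ 1 / 2 → g t = 0 := by
    intro t hd hd2
    have habs : |2 * Real.pi * (t - e₁)| ≤ Real.pi := by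
      rw [abs_mul, abs_of_nonneg (by positivity : (0:ℝ) ≤ 2 * Real.pi)]
      nlinarith
    have hcos := Real.cos_le_one_sub_mul_cos_sq habs
    have hkey : 2 / Real.pi ^ 2 * (2 * Real.pi * (t - e₁)) ^ 2 = 8 * (t - e₁) ^ 2 := by
      field_simp
      ring
    rw [hkey] at hcos
    have hsge : δ ^ 2 ≤ (t - e₁) ^ 2 := by
      rw [← sq_abs (t - e₁)]
      exact pow_le_pow_left₀ hδpos.le hd 2
    rw [hg]
    apply max_eq_left
    have m1 : q ^ 4 * (8 * δ ^ 2) ≤ q ^ 4 * (8 * (t - e₁) ^ 2) :=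
      mul_le_mul_of_nonneg_left (by linarith) (by positivity)
    have m2 : q ^ 4 * (8 * δ ^ 2) = 1 := by linarith [hδ8]
    have m3 : q ^ 4 * (8 * (t - e₁) ^ 2) ≤ q ^ 4 * (1 - Real.cos (2 * Real.pi * (t - e₁))) :=
      mul_le_mul_of_nonneg_left (by linarith) (by positivity)
    linarith
  ---- Part 5: integrability of g/√F and the two integral estimates
  have hIg : IntegrableOn (fun t => g t / Real.sqrt (F t)) (Ioi e₁) := by
    refine Integrable.mono' hint
      ((hgcont.measurable.div
        (Real.continuous_sqrt.measurable.comp hFc.measurable)).aestronglyMeasurable.restrict) ?_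
    filter_upwards with t
    rw [Real.norm_eq_abs, abs_of_nonneg (div_nonneg (hg0 t) (Real.sqrt_nonneg _))]
    rcases eq_or_lt_of_le (Real.sqrt_nonneg (F t)) with h | h
    · rw [← h]; simp
    · rw [div_le_div_iff₀ h h]
      have h6 : 0 ≤ Real.sqrt (F t) := h.le
      nlinarith [hg1 t, h6, h]
  have hJbound : ∫ t in (0:ℝ)..1, g t ≤ 2 * δ := by
    have hper : Function.Periodic g 1 := hgper
    have h01 : ∫ t in (0:ℝ)..1, g t = ∫ t in (e₁ - 1/2)..(e₁ - 1/2 + 1), g t := by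
      have h2 := hper.intervalIntegral_add_eq 0 (e₁ - 1/2)
      simpa using h2
    have hii : ∀ a b : ℝ, IntervalIntegrable g volume a b := fun a b =>
      hgcont.intervalIntegrable a b
    have hsplit1 : ∫ t in (e₁ - 1/2)..(e₁ - 1/2 + 1), g t =
        (∫ t in (e₁ - 1/2)..(e₁ - δ), g t) + ∫ t in (e₁ - δ)..(e₁ - 1/2 + 1), g t :=
      (intervalIntegral.integral_add_adjacent_intervals (hii _ _) (hii _ _)).symm
    have hsplit2 : ∫ t in (e₁ - δ)..(e₁ - 1/2 + 1), g t =
        (∫ t in (e₁ - δ)..(e₁ + δ), g t) + ∫ t in (e₁ + δ)..(e₁ - 1/2 + 1), g t :=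
      (intervalIntegral.integral_add_adjacent_intervals (hii _ _) (hii _ _)).symm
    have hz1 : ∫ t in (e₁ - 1/2)..(e₁ - δ), g t = 0 := by
      rw [← intervalIntegral.integral_zero (a := e₁ - 1/2) (b := e₁ - δ) (E := ℝ)]
      apply intervalIntegral.integral_congr
      intro t ht
      rw [uIcc_of_le (by linarith)] at ht
      have h1 : t - e₁ ≤ -δ := by linarith [ht.2]
      have h2 : -(1/2) ≤ t - e₁ := by linarith [ht.1]
      have h3 : |t - e₁| = -(t - e₁) := abs_of_nonpos (by linarith)
      exact hgzero t (by rw [h3]; linarith) (by rw [h3]; linarith)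
    have hz2 : ∫ t in (e₁ + δ)..(e₁ - 1/2 + 1), g t = 0 := by
      rw [← intervalIntegral.integral_zero (a := e₁ + δ) (b := e₁ - 1/2 + 1) (E := ℝ)]
      apply intervalIntegral.integral_congr
      intro t ht
      rw [uIcc_of_le (by linarith)] at ht
      have h1 : δ ≤ t - e₁ := by linarith [ht.1]
      have h2 : t - e₁ ≤ 1/2 := by linarith [ht.2]
      have h3 : |t - e₁| = t - e₁ := abs_of_nonneg (by linarith)
      exact hgzero t (by rw [h3]; linarith) (by rw [h3]; linarith)
    have hmid : ∫ t in (e₁ - δ)..(e₁ + δ), g t ≤ ∫ t in (e₁ - δ)..(e₁ + δ), (1:ℝ) := by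
      apply intervalIntegral.integral_mono_on (by linarith) (hii _ _)
        (intervalIntegrable_const)
      intro t _
      exact hg1 t
    have hconst : ∫ t in (e₁ - δ)..(e₁ + δ), (1:ℝ) = 2 * δ := by
      simp
      ring
    rw [h01, hsplit1, hsplit2, hz1, hz2]
    rw [hconst] at hmid
    linarith
  have hIlow : Real.sqrt δ' / Real.sqrt M ≤ ∫ t in Ioi e₁, g t / Real.sqrt (F t) := by
    set cc : ℝ := 1 / (2 * Real.sqrt M) with hcc
    have hint1' : IntegrableOn (fun t : ℝ => cc * (t - e₁) ^ (-(1/2) : ℝ))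
        (Ioc e₁ (e₁ + δ')) :=
      (hdom0.mono_set (Ioc_subset_Ioc_right (by linarith))).const_mul cc
    have hint2' : IntegrableOn (fun t => g t / Real.sqrt (F t)) (Ioc e₁ (e₁ + δ')) :=
      hIg.mono_set Ioc_subset_Ioi_self
    have hpt : ∀ t ∈ Ioc e₁ (e₁ + δ'),
        cc * (t - e₁) ^ (-(1/2) : ℝ) ≤ g t / Real.sqrt (F t) := by
      intro t ht
      have h1 : 0 < t - e₁ := by linarith [ht.1]
      have hFt : 0 < F t := hFpos t ht.1
      have hFle : F t ≤ (t - e₁) * M := by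
        rw [hfac, hM]
        have key : (t - e₂) * (t - e₃) ≤ (e₁ + 1 - e₂) * (e₁ + 1 - e₃) := by
          apply mul_le_mul (by linarith [ht.2]) (by linarith [ht.2]) (by linarith [ht.1])
            (by linarith)
        nlinarith [key, h1]
      have hsqle : Real.sqrt (F t) ≤ Real.sqrt (t - e₁) * Real.sqrt M := by
        rw [← Real.sqrt_mul h1.le]
        exact Real.sqrt_le_sqrt hFle
      have hs1 : 0 < Real.sqrt (t - e₁) := Real.sqrt_pos.mpr h1
      have hsF : 0 < Real.sqrt (F t) := Real.sqrt_pos.mpr hFt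
      rw [hrpow_eq _ h1, hcc]
      have step1 : 1 / (2 * Real.sqrt M) * (1 / Real.sqrt (t - e₁)) =
          (1/2) * (1 / (Real.sqrt (t - e₁) * Real.sqrt M)) := by
        field_simp
      rw [step1]
      have step2 : 1 / (Real.sqrt (t - e₁) * Real.sqrt M) ≤ 1 / Real.sqrt (F t) :=
        one_div_le_one_div_of_le hsF hsqle
      have hgt : 1/2 ≤ g t := hghalf t ⟨by linarith [ht.1], ht.2⟩
      calc (1/2) * (1 / (Real.sqrt (t - e₁) * Real.sqrt M))
          ≤ (1/2) * (1 / Real.sqrt (F t)) := by linarith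
        _ ≤ g t * (1 / Real.sqrt (F t)) := by
            apply mul_le_mul_of_nonneg_right hgt (by positivity)
        _ = g t / Real.sqrt (F t) := by rw [mul_one_div]
    have hmono1 : ∫ t in Ioc e₁ (e₁ + δ'), cc * (t - e₁) ^ (-(1/2) : ℝ) ≤
        ∫ t in Ioc e₁ (e₁ + δ'), g t / Real.sqrt (F t) :=
      setIntegral_mono_on hint1' hint2' measurableSet_Ioc hpt
    have hmono2 : ∫ t in Ioc e₁ (e₁ + δ'), g t / Real.sqrt (F t) ≤
        ∫ t in Ioi e₁, g t / Real.sqrt (F t) := by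
      apply setIntegral_mono_set hIg
      · exact Eventually.of_forall (fun t => div_nonneg (hg0 t) (Real.sqrt_nonneg _))
      · exact HasSubset.Subset.eventuallyLE Ioc_subset_Ioi_self
    have hcomp : ∫ t in Ioc e₁ (e₁ + δ'), cc * (t - e₁) ^ (-(1/2) : ℝ) =
        Real.sqrt δ' / Real.sqrt M := by
      rw [← intervalIntegral.integral_of_le (by linarith : e₁ ≤ e₁ + δ')]
      rw [intervalIntegral.integral_const_mul]
      have h5 : (∫ t in e₁..(e₁ + δ'), (t - e₁) ^ (-(1/2) : ℝ)) =
          ∫ x in (e₁ - e₁)..(e₁ + δ' - e₁), x ^ (-(1/2) : ℝ) :=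
        intervalIntegral.integral_comp_sub_right (fun x => x ^ (-(1/2) : ℝ)) e₁
      rw [h5, show e₁ - e₁ = (0:ℝ) by ring, show e₁ + δ' - e₁ = δ' by ring]
      rw [integral_rpow (Or.inl (by norm_num))]
      rw [Real.zero_rpow (by norm_num)]
      rw [show (-(1/2) : ℝ) + 1 = 1/2 by norm_num]
      rw [← Real.sqrt_eq_rpow]
      rw [hcc]
      field_simp
      ring
    rw [← hcomp]
    exact le_trans hmono1 hmono2
  ---- Part 6: apply the two equidistribution hypotheses and take limits
  set gc : ℝ → ℂ := fun t => ((g t : ℝ) : ℂ) with hgc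
  have hgccont : Continuous gc := Complex.continuous_ofReal.comp hgcont
  have hgcbdd : ∃ C : ℝ, ∀ t, ‖gc t‖ ≤ C := by
    refine ⟨1, fun t => ?_⟩
    rw [hgc]
    simp only [Complex.norm_real, Real.norm_eq_abs]
    rw [abs_of_nonneg (hg0 t)]
    exact hg1 t
  have hgcper : ∀ t, gc (t + 1) = gc t := fun t => by rw [hgc]; simp [hgper t]
  have h1 := hequi gc hgccont hgcbdd
  have h2 := H gc hgccont hgcper
  have heqC := tendsto_nhds_unique h1 h2
  have hIcast : ∫ t in Ioi e₁, gc t / (Real.sqrt (F t) : ℂ) =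
      ((∫ t in Ioi e₁, g t / Real.sqrt (F t) : ℝ) : ℂ) := by
    have h4 : ∫ t in Ioi e₁, gc t / (Real.sqrt (F t) : ℂ) =
        ∫ t in Ioi e₁, ((g t / Real.sqrt (F t) : ℝ) : ℂ) :=
      integral_congr_ae (Eventually.of_forall fun t => (Complex.ofReal_div _ _).symm)
    rw [h4]
    exact integral_ofReal
  have hJcast : ∫ t in (0:ℝ)..1, gc t = ((∫ t in (0:ℝ)..1, g t : ℝ) : ℂ) :=
    intervalIntegral.integral_ofReal
  rw [hIcast, hJcast] at heqC
  have heqR : 2 / ω * (∫ t in Ioi e₁, g t / Real.sqrt (F t)) = ∫ t in (0:ℝ)..1, g t := by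
    have h3 : ((2 / ω * (∫ t in Ioi e₁, g t / Real.sqrt (F t)) : ℝ) : ℂ) =
        ((∫ t in (0:ℝ)..1, g t : ℝ) : ℂ) := by
      push_cast
      rw [← heqC]
    exact_mod_cast h3
  ---- Part 7: the numerical contradiction
  have hfrac : 0 < 2 / ω := by positivity
  have hkey : 2 / ω * (Real.sqrt δ' / Real.sqrt M) ≤ 2 * δ := by
    calc 2 / ω * (Real.sqrt δ' / Real.sqrt M)
        ≤ 2 / ω * (∫ t in Ioi e₁, g t / Real.sqrt (F t)) :=
          mul_le_mul_of_nonneg_left hIlow hfrac.le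
      _ = ∫ t in (0:ℝ)..1, g t := heqR
      _ ≤ 2 * δ := hJbound
  have hsd' : Real.sqrt δ' = 1 / (Real.sqrt (2 * Real.pi) * q) := by
    rw [hδ', one_div, Real.sqrt_inv, show 2 * Real.pi * q ^ 2 = (2 * Real.pi) * q ^ 2 by ring,
      Real.sqrt_mul (by positivity), Real.sqrt_sq hq0.le, one_div]
  have h2δ : 2 * δ = 1 / (Real.sqrt 2 * q ^ 2) := by
    rw [hδ]
    have : Real.sqrt 2 ≠ 0 := by positivity
    field_simp
  have hsqrt2π : 0 < Real.sqrt (2 * Real.pi) := Real.sqrt_pos.mpr (by positivity)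
  rw [hsd', h2δ] at hkey
  have hL : 2 / ω * (1 / (Real.sqrt (2 * Real.pi) * q) / Real.sqrt M) =
      2 / (c * q) := by
    rw [hcdef]
    field_simp
  rw [hL] at hkey
  rw [div_le_div_iff₀ (by positivity) (by positivity)] at hkey
  -- hkey : 2 * (√2 * q²) ≤ 1 * (c * q), q = 1 + c
  rw [hqdef] at hkey
  nlinarith [hkey, hcpos, hs2, mul_nonneg (sub_nonneg.mpr hs2) (sq_nonneg (1 + c)),
    mul_nonneg hcpos.le hcpos.le]
end

section
/- Let e ∈ ℝ and let y : (e,∞) → ℝ be continuous and positive with x ↦ 1/y(x) Lebesgue integrable on (e,∞), and set ω = 2∫_e^∞ 1/y(x) dx. Suppose that ∫_e^∞ exp(2πinx)/y(x) dx = 0 for every nonzero integer n. Then for every continuous function f : ℝ → ℂ with period 1: ∫_e^∞ f(x)/y(x) dx = (ω/2)·∫₀¹ f(x) dx. -/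
open Set MeasureTheory

open scoped Real

/-- Let `y` be continuous and positive on `(e,∞)` with `1/y`
Lebesgue integrable there, and `ω = 2∫_e^∞ dx/y`. If `∫_e^∞ exp(2πinx)/y dx = 0`
for every nonzero integer `n`, then for every continuous 1-periodic `f : ℝ → ℂ`,
`∫_e^∞ f(x)/y(x) dx = (ω/2)·∫₀¹ f`. -/
theorem stmt16 (e : ℝ) (y : ℝ → ℝ)
    (hy : ContinuousOn y (Ioi e))
    (hypos : ∀ x ∈ Ioi e, 0 < y x)
    (hint : IntegrableOn (fun x => 1 / y x) (Ioi e))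
    (ω : ℝ) (hω : ω = 2 * ∫ x in Ioi e, 1 / y x)
    (hvanish : ∀ n : ℤ, n ≠ 0 →
      ∫ x in Ioi e, Complex.exp (2 * (Real.pi : ℂ) * Complex.I * (n : ℂ) * (x : ℂ)) /
        (y x : ℂ) = 0)
    (f : ℝ → ℂ) (hf : Continuous f) (hper : ∀ x, f (x + 1) = f x) :
    ∫ x in Ioi e, f x / (y x : ℂ) = ((ω / 2 : ℝ) : ℂ) * ∫ x in (0:ℝ)..1, f x := by
  haveI : Fact ((0:ℝ) < 1) := ⟨one_pos⟩
  have hperiodic : Function.Periodic f 1 := hper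
  have hg0c : Continuous (hperiodic.lift) := continuous_coinduced_dom.mpr hf
  set g : C(AddCircle (1:ℝ), ℂ) := ⟨hperiodic.lift, hg0c⟩ with hgdef
  have hgf : ∀ x : ℝ, g (x : AddCircle (1:ℝ)) = f x := fun x => hperiodic.lift_coe x
  have hcoe : Continuous (fun x : ℝ => (x : AddCircle (1:ℝ))) := continuous_quotient_mk'
  have h1C : Integrable (fun x => ((1 / y x : ℝ) : ℂ)) (volume.restrict (Ioi e)) :=
    hint.ofReal
  have key_int : ∀ h : C(AddCircle (1:ℝ), ℂ),
      Integrable (fun x : ℝ => h (x : AddCircle (1:ℝ)) * ((1 / y x : ℝ) : ℂ))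
        (volume.restrict (Ioi e)) := by
    intro h
    exact h1C.bdd_mul (f := fun x : ℝ => h (x : AddCircle (1:ℝ))) ((h.continuous.comp hcoe).aestronglyMeasurable)
      (c := ‖h‖) (Filter.Eventually.of_forall fun x => h.norm_coe_le_norm _)
  -- The first functional
  have key_bound : ∀ h : C(AddCircle (1:ℝ), ℂ),
      ‖∫ x in Ioi e, h (x : AddCircle (1:ℝ)) * ((1 / y x : ℝ) : ℂ)‖ ≤
        (∫ x in Ioi e, 1 / y x) * ‖h‖ := by
    intro h
    have hb : ∀ᵐ (x : ℝ) ∂(volume.restrict (Ioi e)),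
        ‖h (x : AddCircle (1:ℝ)) * ((1 / y x : ℝ) : ℂ)‖ ≤ ‖h‖ * (1 / y x) := by
      filter_upwards [ae_restrict_mem measurableSet_Ioi] with x hx
      have h1 : (0:ℝ) ≤ 1 / y x := le_of_lt (one_div_pos.mpr (hypos x hx))
      rw [norm_mul, Complex.norm_real, Real.norm_eq_abs, abs_of_nonneg h1]
      exact mul_le_mul_of_nonneg_right (h.norm_coe_le_norm _) h1
    calc ‖∫ x in Ioi e, h (x : AddCircle (1:ℝ)) * ((1 / y x : ℝ) : ℂ)‖
        ≤ ∫ x in Ioi e, ‖h‖ * (1 / y x) :=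
          norm_integral_le_of_norm_le (hint.const_mul ‖h‖) hb
      _ = (∫ x in Ioi e, 1 / y x) * ‖h‖ := by
          rw [integral_const_mul]; ring
  let Φ₁ : C(AddCircle (1:ℝ), ℂ) →L[ℂ] ℂ :=
    LinearMap.mkContinuous
      { toFun := fun h => ∫ x in Ioi e, h (x : AddCircle (1:ℝ)) * ((1 / y x : ℝ) : ℂ)
        map_add' := fun h1 h2 => by
          simp only [ContinuousMap.add_apply]
          rw [← integral_add (key_int h1) (key_int h2)]
          congr 1; ext x; ring
        map_smul' := fun c h => by
          simp only [ContinuousMap.smul_apply, smul_eq_mul, RingHom.id_apply]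
          rw [← integral_const_mul]
          congr 1; ext x; ring }
      (∫ x in Ioi e, 1 / y x) key_bound
  have hIg : ∀ h : C(AddCircle (1:ℝ), ℂ),
      IntervalIntegrable (fun x : ℝ => h (x : AddCircle (1:ℝ))) volume 0 1 :=
    fun h => (h.continuous.comp hcoe).intervalIntegrable 0 1
  let Φ₂ : C(AddCircle (1:ℝ), ℂ) →L[ℂ] ℂ :=
    LinearMap.mkContinuous
      { toFun := fun h => ((ω / 2 : ℝ) : ℂ) * ∫ x in (0:ℝ)..1, h (x : AddCircle (1:ℝ))
        map_add' := fun h1 h2 => by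
          simp only [ContinuousMap.add_apply]
          rw [intervalIntegral.integral_add (hIg h1) (hIg h2)]
          ring
        map_smul' := fun c h => by
          simp only [ContinuousMap.smul_apply, smul_eq_mul, RingHom.id_apply]
          rw [intervalIntegral.integral_const_mul]
          ring }
      |ω / 2| (by
        intro h
        simp only [LinearMap.coe_mk, AddHom.coe_mk, norm_mul, Complex.norm_real,
          Real.norm_eq_abs]
        have := intervalIntegral.norm_integral_le_of_norm_le_const
          (C := ‖h‖) (f := fun x : ℝ => h (x : AddCircle (1:ℝ))) (a := (0:ℝ)) (b := 1)
          (fun x _ => h.norm_coe_le_norm _)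
        calc |ω / 2| * ‖∫ x in (0:ℝ)..1, h (x : AddCircle (1:ℝ))‖
            ≤ |ω / 2| * (‖h‖ * |1 - 0|) :=
              mul_le_mul_of_nonneg_left this (abs_nonneg _)
          _ = |ω / 2| * ‖h‖ := by norm_num)
  have hdense : Dense ((Submodule.span ℂ (Set.range (@fourier 1)) : Submodule ℂ _) :
      Set C(AddCircle (1:ℝ), ℂ)) := by
    rw [dense_iff_closure_eq, ← Submodule.topologicalClosure_coe,
      span_fourier_closure_eq_top, Submodule.top_coe]
  have heq : Φ₁ = Φ₂ := by
    apply ContinuousLinearMap.ext_on hdense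
    rintro _ ⟨n, rfl⟩
    show (∫ x in Ioi e, fourier n (x : AddCircle (1:ℝ)) * ((1 / y x : ℝ) : ℂ)) =
      ((ω / 2 : ℝ) : ℂ) * ∫ x in (0:ℝ)..1, fourier n (x : AddCircle (1:ℝ))
    rcases eq_or_ne n 0 with rfl | hn
    · simp only [fourier_zero, one_mul]
      have h01 : (∫ _ in (0:ℝ)..1, (1:ℂ)) = 1 := by simp
      rw [h01, mul_one, hω]
      have h2 : ∫ x in Ioi e, ((1 / y x : ℝ) : ℂ) = (((∫ x in Ioi e, 1 / y x) : ℝ) : ℂ) :=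
        integral_ofReal
      rw [h2]
      push_cast
      ring
    · have hc : (2 * (π:ℂ) * Complex.I * (n:ℂ)) ≠ 0 := by
        simp [Real.pi_ne_zero, Complex.I_ne_zero, hn]
      have hL : (∫ x in Ioi e, fourier n (x : AddCircle (1:ℝ)) * ((1 / y x : ℝ) : ℂ)) = 0 := by
        rw [← hvanish n hn]
        apply setIntegral_congr_fun measurableSet_Ioi
        intro x hx
        have hyx : (y x : ℂ) ≠ 0 := by
          exact_mod_cast (hypos x hx).ne'
        simp only [fourier_coe_apply, Complex.ofReal_one, div_one, Complex.ofReal_div,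
          mul_one_div]
      have hR : (∫ x in (0:ℝ)..1, fourier n (x : AddCircle (1:ℝ))) = 0 := by
        have : (∫ x in (0:ℝ)..1, fourier n (x : AddCircle (1:ℝ))) =
            ∫ x in (0:ℝ)..1, Complex.exp ((2 * (π:ℂ) * Complex.I * (n:ℂ)) * (x:ℂ)) := by
          apply intervalIntegral.integral_congr
          intro x _
          simp only [fourier_coe_apply, Complex.ofReal_one, div_one]
        rw [this, integral_exp_mul_complex hc]
        have h1 : Complex.exp (2 * (π:ℂ) * Complex.I * (n:ℂ) * ((1:ℝ):ℂ)) = 1 := by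
          rw [Complex.ofReal_one, mul_one,
            show (2 * (π:ℂ) * Complex.I * (n:ℂ)) = (n:ℂ) * (2 * (π:ℂ) * Complex.I) by ring]
          exact Complex.exp_int_mul_two_pi_mul_I n
        rw [h1, Complex.ofReal_zero, mul_zero, Complex.exp_zero]
        simp
      rw [hL, hR, mul_zero]
  have := DFunLike.congr_fun heq g
  simp only [Φ₁, Φ₂, LinearMap.mkContinuous_apply, LinearMap.coe_mk, AddHom.coe_mk] at this
  calc ∫ x in Ioi e, f x / (y x : ℂ)
      = ∫ x in Ioi e, g (x : AddCircle (1:ℝ)) * ((1 / y x : ℝ) : ℂ) := by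
        apply setIntegral_congr_fun measurableSet_Ioi
        intro x _
        show f x / (y x : ℂ) = g (x : AddCircle (1:ℝ)) * ((1 / y x : ℝ) : ℂ)
        rw [hgf x]
        push_cast
        ring
    _ = ((ω / 2 : ℝ) : ℂ) * ∫ x in (0:ℝ)..1, g (x : AddCircle (1:ℝ)) := this
    _ = ((ω / 2 : ℝ) : ℂ) * ∫ x in (0:ℝ)..1, f x := by
        congr 1
end

section
/- Let A, B ∈ ℝ with 4A³ + 27B² ≠ 0, let F(x) = x³ + Ax + B, let e be the largest real root of F (so F(e) = 0 and F(x) > 0 for all x > e), let y(x) = √(F(x)), and set ω = 2∫_e^∞ 1/y(x) dx (a finite positive number). If (x_n)_{n≥0} is any sequence in (e,∞) such that for every bounded continuous f : ℝ → ℂ, lim_{N→∞} (1/N) Σ_{n=0}^{N−1} f(x_n) = (2/ω) ∫_e^∞ f(x)/y(x) dx, then (x_n) is not equidistributed modulo 1 with respect to Lebesgue measure. -/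
open Filter Set MeasureTheory

set_option maxHeartbeats 1000000 in
/-- general version: Let `F(x) = x³ + Ax + B` (with
`4A³ + 27B² ≠ 0`), `e` its largest real root, `y = √F`, and `ω = 2∫_e^∞ dx/y`.
If `(x_n)` is any sequence in `(e,∞)` equidistributed with respect to the measure
`(2/ω)·(1/y)dx` (tested against all bounded continuous `f : ℝ → ℂ`), then `(x_n)`
is not equidistributed modulo 1 with respect to Lebesgue measure. -/
theorem stmt17 (A B : ℝ) (hAB : 4 * A ^ 3 + 27 * B ^ 2 ≠ 0)
    (F : ℝ → ℝ) (hF : ∀ t, F t = t ^ 3 + A * t + B)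
    (e : ℝ) (he0 : F e = 0) (hepos : ∀ t, e < t → 0 < F t)
    (ω : ℝ) (hω : ω = 2 * ∫ t in Ioi e, 1 / Real.sqrt (F t))
    (x : ℕ → ℝ) (hx : ∀ n, x n ∈ Ioi e)
    (hequi : ∀ f : ℝ → ℂ, Continuous f → (∃ C : ℝ, ∀ t, ‖f t‖ ≤ C) →
      Tendsto (fun N : ℕ => (∑ n ∈ Finset.range N, f (x n)) / (N : ℂ)) atTop
        (nhds ((2 / (ω : ℂ)) * ∫ t in Ioi e, f t / (Real.sqrt (F t) : ℂ)))) :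
    ¬ (∀ f : ℝ → ℂ, Continuous f → (∀ t, f (t + 1) = f t) →
      Tendsto (fun N : ℕ => (∑ n ∈ Finset.range N, f (x n)) / (N : ℂ)) atTop
        (nhds (∫ t in (0:ℝ)..1, f t))) := by
  intro H
  have hFc : Continuous F := by
    have : F = fun t => t ^ 3 + A * t + B := funext hF
    rw [this]; continuity
  -- Step 1: test against the constant function 1
  have hconst := hequi (fun _ => 1) continuous_const ⟨1, by simp⟩
  have hNN : Tendsto (fun N : ℕ => (∑ _n ∈ Finset.range N, (1:ℂ)) / (N : ℂ)) atTop (nhds 1) := by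
    have hev : ∀ᶠ N : ℕ in atTop,
        (1 : ℂ) = (∑ _n ∈ Finset.range N, (1:ℂ)) / (N : ℂ) := by
      filter_upwards [eventually_ge_atTop 1] with N hN
      have hN0 : (N : ℂ) ≠ 0 := by
        exact_mod_cast Nat.cast_ne_zero.mpr (by omega)
      field_simp [Finset.sum_const, Finset.card_range]
      simp
    exact Tendsto.congr' hev tendsto_const_nhds
  have h1c : (1 : ℂ) = (2 / (ω : ℂ)) * ∫ t in Ioi e, (1:ℂ) / (Real.sqrt (F t) : ℂ) :=
    tendsto_nhds_unique hNN hconst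
  have hcast : ∀ g : ℝ → ℝ, (∫ t in Ioi e, ((g t : ℝ) : ℂ)) =
      ((∫ t in Ioi e, g t : ℝ) : ℂ) := fun g => integral_ofReal
  have h1r : (1 : ℝ) = (2 / ω) * ∫ t in Ioi e, 1 / Real.sqrt (F t) := by
    have h2 : (1 : ℂ) = (2 / (ω : ℂ)) * ((∫ t in Ioi e, 1 / Real.sqrt (F t) : ℝ) : ℂ) := by
      rw [h1c, ← hcast]
      congr 1
      apply integral_congr_ae
      filter_upwards with t
      push_cast
      ring
    exact_mod_cast h2
  set I₀ : ℝ := ∫ t in Ioi e, 1 / Real.sqrt (F t) with hI₀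
  have hI₀ne : I₀ ≠ 0 := by
    intro h; rw [h, mul_zero] at h1r; norm_num at h1r
  have hωne : ω ≠ 0 := by
    intro h; rw [h, div_zero, zero_mul] at h1r; norm_num at h1r
  have hInt1 : IntegrableOn (fun t => 1 / Real.sqrt (F t)) (Ioi e) := by
    by_contra h
    exact hI₀ne (integral_undef h)
  have hI₀nonneg : 0 ≤ I₀ := by
    rw [hI₀]
    apply setIntegral_nonneg measurableSet_Ioi
    intro t _
    positivity
  have hI₀pos : 0 < I₀ := lt_of_le_of_ne hI₀nonneg (Ne.symm hI₀ne)
  have hωpos : 0 < ω := by rw [hω]; linarith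
  -- Step 2: constants
  set K : ℝ := (|e| + 1) ^ 2 + (|e| + 1) * |e| + e ^ 2 + |A| + 1 with hKdef
  have hK : 0 < K := by positivity
  set ε : ℝ := min (1/2) (1 / (2 * ω ^ 2 * K)) with hεdef
  have hε0 : 0 < ε := lt_min (by norm_num) (by positivity)
  have hεhalf : ε ≤ 1/2 := min_le_left _ _
  have hεK : ε ≤ 1 / (2 * ω ^ 2 * K) := min_le_right _ _
  -- Step 3: bump function
  set bump : ℝ → ℝ := fun s => max 0 (min 1 ((8/ε) * min (s - ε/8) (7*ε/8 - s))) with hbdef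
  have hbump_cont : Continuous bump := by
    apply continuous_const.max
    apply continuous_const.min
    apply continuous_const.mul
    exact (continuous_id.sub continuous_const).min (continuous_const.sub continuous_id)
  have hbump_nonneg : ∀ s, 0 ≤ bump s := fun s => le_max_left _ _
  have hbump_le1 : ∀ s, bump s ≤ 1 := fun s => max_le zero_le_one (min_le_left _ _)
  have hbump0 : ∀ s, (s ≤ ε/8 ∨ 7*ε/8 ≤ s) → bump s = 0 := by
    intro s hs
    have hm : min (s - ε/8) (7*ε/8 - s) ≤ 0 := by
      rcases hs with hs | hs
      · exact le_trans (min_le_left _ _) (by linarith)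
      · exact le_trans (min_le_right _ _) (by linarith)
    exact max_eq_left (le_trans (min_le_right _ _)
      (mul_nonpos_of_nonneg_of_nonpos (by positivity) hm))
  have hbump1 : ∀ s, ε/4 ≤ s → s ≤ 3*ε/4 → bump s = 1 := by
    intro s h1 h2
    have hmin : ε/8 ≤ min (s - ε/8) (7*ε/8 - s) := le_min (by linarith) (by linarith)
    have : (1 : ℝ) ≤ (8/ε) * min (s - ε/8) (7*ε/8 - s) := by
      rw [show (1:ℝ) = (8/ε) * (ε/8) by field_simp]
      exact mul_le_mul_of_nonneg_left hmin (by positivity)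
    rw [hbdef]
    simp only [min_eq_left this]
    simp
  -- the periodic test function
  set fr : ℝ → ℝ := fun t => bump (Int.fract (t - e)) with hfrdef
  have hbump01eq : bump 0 = bump 1 := by
    rw [hbump0 0 (Or.inl (by linarith)), hbump0 1 (Or.inr (by linarith))]
  have hfr_cont : Continuous fr := by
    have h1 : Continuous (bump ∘ Int.fract) :=
      ContinuousOn.comp_fract'' hbump_cont.continuousOn hbump01eq
    exact h1.comp (continuous_id.sub continuous_const)
  have hfr_per : ∀ t, fr (t + 1) = fr t := by
    intro t
    simp only [hfrdef]
    rw [show t + 1 - e = (t - e) + 1 by ring, Int.fract_add_one]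
  have hfr_nonneg : ∀ t, 0 ≤ fr t := fun t => hbump_nonneg _
  have hfr_le1 : ∀ t, fr t ≤ 1 := fun t => hbump_le1 _
  set fC : ℝ → ℂ := fun t => ((fr t : ℝ) : ℂ) with hfCdef
  have hfC_cont : Continuous fC := Complex.continuous_ofReal.comp hfr_cont
  have hfC_bdd : ∃ C : ℝ, ∀ t, ‖fC t‖ ≤ C := by
    refine ⟨1, fun t => ?_⟩
    simp only [hfCdef, Complex.norm_real, Real.norm_eq_abs, abs_le]
    constructor <;> [linarith [hfr_nonneg t]; exact hfr_le1 t]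
  have hfC_per : ∀ t, fC (t + 1) = fC t := fun t => by simp [hfCdef, hfr_per t]
  -- Step 4: equate the two limits
  have key : (∫ t in (0:ℝ)..1, fC t) =
      (2 / (ω : ℂ)) * ∫ t in Ioi e, fC t / (Real.sqrt (F t) : ℂ) :=
    tendsto_nhds_unique (H fC hfC_cont hfC_per) (hequi fC hfC_cont hfC_bdd)
  have keyR : (∫ t in (0:ℝ)..1, fr t) =
      (2 / ω) * ∫ t in Ioi e, fr t / Real.sqrt (F t) := by
    have h2 : (∫ t in Ioi e, fC t / (Real.sqrt (F t) : ℂ)) =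
        ((∫ t in Ioi e, fr t / Real.sqrt (F t) : ℝ) : ℂ) := by
      rw [← hcast fun t => fr t / Real.sqrt (F t)]
      apply integral_congr_ae
      filter_upwards with t
      simp only [hfCdef]
      push_cast
      ring
    rw [h2, intervalIntegral.integral_ofReal] at key
    exact_mod_cast key
  -- Step 5: factorization and bound on F near e
  have hFfact : ∀ t, F t = (t - e) * (t^2 + t*e + (e^2 + A)) := by
    intro t
    linear_combination hF t + he0 - hF e
  have hFle : ∀ t ∈ Ioc (e + ε/4) (e + 3*ε/4), F t ≤ K * ε := by
    intro t ht
    obtain ⟨ht1, ht2⟩ := ht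
    have htabs : |t| ≤ |e| + 1 := by
      rw [abs_le]
      constructor
      · nlinarith [neg_abs_le e]
      · nlinarith [le_abs_self e]
    have hG : t^2 + t*e + (e^2 + A) ≤ K := by
      rw [hKdef]
      nlinarith [le_abs_self A, abs_nonneg t, abs_nonneg e, sq_abs t,
        le_abs_self (t*e), abs_mul t e,
        mul_le_mul_of_nonneg_right htabs (abs_nonneg e)]
    have hte : 0 < t - e := by linarith
    have hte2 : t - e ≤ ε := by linarith
    rw [hFfact t]
    nlinarith
  -- Step 6: lower bound for the weighted integral
  set S : Set ℝ := Ioc (e + ε/4) (e + 3*ε/4) with hSdef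
  set J : ℝ := ∫ t in Ioi e, fr t / Real.sqrt (F t) with hJdef
  have hSsub : S ⊆ Ioi e := by
    rw [hSdef]
    intro t ht
    exact lt_trans (by linarith : e < e + ε/4) ht.1
  have hfrS : ∀ t ∈ S, fr t = 1 := by
    intro t ht
    obtain ⟨ht1, ht2⟩ := ht
    have h01 : Int.fract (t - e) = t - e :=
      Int.fract_eq_self.mpr ⟨by linarith, by linarith⟩
    simp only [hfrdef, h01]
    exact hbump1 _ (by linarith) (by linarith)
  have hIntJ : IntegrableOn (fun t => fr t / Real.sqrt (F t)) (Ioi e) := by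
    have hmeas : AEStronglyMeasurable (fun t => fr t / Real.sqrt (F t))
        (volume.restrict (Ioi e)) :=
      ((hfr_cont.measurable.div
        ((Real.continuous_sqrt.comp hFc).measurable)).aestronglyMeasurable)
    refine Integrable.mono hInt1 hmeas ?_
    filter_upwards with t
    rw [Real.norm_eq_abs, Real.norm_eq_abs, abs_div, abs_div, abs_one]
    rcases eq_or_ne (Real.sqrt (F t)) 0 with h | h
    · simp [h]
    · have hpos : 0 < |Real.sqrt (F t)| := abs_pos.mpr h
      exact (div_le_div_iff_of_pos_right hpos).mpr
        (abs_le.mpr ⟨by linarith [hfr_nonneg t], hfr_le1 t⟩)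
  have hJ1 : ∫ t in S, fr t / Real.sqrt (F t) ≤ J := by
    rw [hJdef]
    apply setIntegral_mono_set hIntJ
    · filter_upwards with t using div_nonneg (hfr_nonneg t) (Real.sqrt_nonneg _)
    · exact HasSubset.Subset.eventuallyLE hSsub
  have hc : ∀ t ∈ S, 1 / Real.sqrt (K * ε) ≤ fr t / Real.sqrt (F t) := by
    intro t ht
    rw [hfrS t ht]
    have hFt : 0 < F t := hepos t (hSsub ht)
    have h1 : Real.sqrt (F t) ≤ Real.sqrt (K * ε) := Real.sqrt_le_sqrt (hFle t ht)
    exact one_div_le_one_div_of_le (Real.sqrt_pos.mpr hFt) h1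
  have hvolS : (volume S).toReal = ε/2 := by
    rw [hSdef, Real.volume_Ioc, ENNReal.toReal_ofReal (by linarith)]
    ring
  have hJ2 : (1 / Real.sqrt (K * ε)) * (volume S).toReal ≤
      ∫ t in S, fr t / Real.sqrt (F t) := by
    rw [mul_comm, ← smul_eq_mul, ← Measure.real_def]
    apply setIntegral_ge_of_const_le
    · rw [hSdef]; exact measurableSet_Ioc
    · rw [hSdef, Real.volume_Ioc]; exact ENNReal.ofReal_ne_top
    · exact hc
    · exact hIntJ.mono_set hSsub
  -- Step 7: upper bound for the interval integral
  have hbint : ∀ a b : ℝ, IntervalIntegrable bump volume a b :=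
    fun a b => hbump_cont.intervalIntegrable a b
  have hper : Function.Periodic fr 1 := hfr_per
  have hshift : (∫ t in (0:ℝ)..1, fr t) = ∫ t in e..(e+1), fr t := by
    have h := hper.intervalIntegral_add_eq 0 e
    simpa using h
  have hcongr : (∫ t in e..(e+1), fr t) = ∫ t in e..(e+1), bump (t - e) := by
    apply intervalIntegral.integral_congr
    intro t ht
    rw [uIcc_of_le (by linarith)] at ht
    obtain ⟨ht1, ht2⟩ := ht
    rcases eq_or_lt_of_le ht2 with h | h
    · simp only [hfrdef]
      rw [h, show e + 1 - e = (1:ℝ) by ring, Int.fract_one, ← hbump01eq]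
    · have hfr' : Int.fract (t - e) = t - e :=
        Int.fract_eq_self.mpr ⟨by linarith, by linarith⟩
      simp only [hfrdef, hfr']
  have hcomp : (∫ t in e..(e+1), bump (t - e)) = ∫ s in (0:ℝ)..1, bump s := by
    rw [intervalIntegral.integral_comp_sub_right (fun s => bump s) e]
    norm_num
  have hbub : (∫ s in (0:ℝ)..1, bump s) ≤ 3*ε/4 := by
    have e1 : (∫ s in (0:ℝ)..(ε/8), bump s) = 0 := by
      have heq : EqOn bump (fun _ => (0:ℝ)) (uIcc 0 (ε/8)) := by
        intro s hs
        rw [uIcc_of_le (by positivity)] at hs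
        exact hbump0 s (Or.inl hs.2)
      rw [intervalIntegral.integral_congr heq]
      simp
    have e3 : (∫ s in (7*ε/8)..1, bump s) = 0 := by
      have heq : EqOn bump (fun _ => (0:ℝ)) (uIcc (7*ε/8) 1) := by
        intro s hs
        rw [uIcc_of_le (by linarith)] at hs
        exact hbump0 s (Or.inr hs.1)
      rw [intervalIntegral.integral_congr heq]
      simp
    have e2 : (∫ s in (ε/8)..(7*ε/8), bump s) ≤ ∫ _s in (ε/8)..(7*ε/8), (1:ℝ) :=
      intervalIntegral.integral_mono_on (by linarith) (hbint _ _)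
        intervalIntegrable_const (fun s _ => hbump_le1 s)
    have e2' : (∫ _s in (ε/8)..(7*ε/8), (1:ℝ)) = 3*ε/4 := by
      rw [intervalIntegral.integral_const]
      simp
      ring
    have hadd : (∫ s in (0:ℝ)..1, bump s) =
        (∫ s in (0:ℝ)..(ε/8), bump s) + (∫ s in (ε/8)..(7*ε/8), bump s)
          + (∫ s in (7*ε/8)..1, bump s) := by
      rw [intervalIntegral.integral_add_adjacent_intervals (hbint 0 (ε/8)) (hbint (ε/8) (7*ε/8)),
        intervalIntegral.integral_add_adjacent_intervals (hbint 0 (7*ε/8)) (hbint (7*ε/8) 1)]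
    rw [hadd, e1, e3]
    linarith
  have hupper : (∫ t in (0:ℝ)..1, fr t) ≤ ε := by
    rw [hshift, hcongr, hcomp]
    linarith
  -- Step 8: combine everything
  set s : ℝ := Real.sqrt (K * ε) with hs
  have hspos : 0 < s := Real.sqrt_pos.mpr (by positivity)
  have hs1 : ω * s < 1 := by
    have hKε : K * ε < 1 / ω^2 := by
      have h4 : K * ε ≤ 1/(2*ω^2) := by
        calc K * ε ≤ K * (1/(2*ω^2*K)) := mul_le_mul_of_nonneg_left hεK hK.le
          _ = 1/(2*ω^2) := by
              field_simp
      have h5 : 0 < 1/(2*ω^2) := by positivity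
      have h6 : 1/(2*ω^2) < 1/ω^2 := by
        apply div_lt_div_of_pos_left one_pos (by positivity)
        nlinarith
      linarith
    have hslt : s < 1/ω := by
      rw [hs, show (1:ℝ)/ω = Real.sqrt ((1/ω)^2) from (Real.sqrt_sq (by positivity)).symm]
      apply Real.sqrt_lt_sqrt (by positivity)
      rw [div_pow]
      simpa using hKε
    calc ω * s < ω * (1/ω) := mul_lt_mul_of_pos_left hslt hωpos
      _ = 1 := by field_simp
  have hJlow : (1/s) * (ε/2) ≤ J := by
    calc (1/s) * (ε/2) = (1/s) * (volume S).toReal := by rw [hvolS]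
      _ ≤ ∫ t in S, fr t / Real.sqrt (F t) := hJ2
      _ ≤ J := hJ1
  have hfinal : ε < (2/ω) * J := by
    have h2 : (2/ω) * ((1/s) * (ε/2)) = ε / (ω*s) := by
      field_simp
    have h3 : ε < ε / (ω*s) := by
      rw [lt_div_iff₀ (by positivity)]
      nlinarith
    calc ε < ε/(ω*s) := h3
      _ = (2/ω) * ((1/s)*(ε/2)) := h2.symm
      _ ≤ (2/ω) * J := mul_le_mul_of_nonneg_left hJlow (by positivity)
  rw [keyR] at hupper
  linarith
end

section
/- Let A, B ∈ ℝ with 4A³ + 27B² ≠ 0, let F(x) = x³ + Ax + B, let e be the largest real root of F (so F(e) = 0 and F(x) > 0 for all x > e), let y(x) = √(F(x)), and assume that y is strictly increasing on (e,∞). Then for every nonzero integer k: ∫_e^∞ exp(2πikx)/y(x) dx ≠ 0. -/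
open Set MeasureTheory

open intervalIntegral in

lemma sin_integral_pos (f : ℝ → ℝ) (hint : IntegrableOn f (Ioi 0))
    (hcont : ContinuousOn f (Ioi 0))
    (hanti : StrictAntiOn f (Ioi 0))
    (m : ℕ) (hm : 0 < m) :
    0 < ∫ t in Ioi (0:ℝ), f t * Real.sin (2 * Real.pi * m * t) := by
  set c : ℝ := 2 * Real.pi * m with hc
  have hmpos : (0:ℝ) < m := by exact_mod_cast hm
  have hcpos : 0 < c := by positivity
  set T : ℝ := 1 / m with hT
  set h : ℝ := 1 / (2 * m) with hh
  have hTpos : 0 < T := by positivity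
  have hhpos : 0 < h := by positivity
  have hT2h : T = 2 * h := by rw [hT, hh]; ring
  have hch : c * h = Real.pi := by
    rw [hc, hh]; field_simp
  set g : ℝ → ℝ := fun t => f t * Real.sin (c * t) with hg
  -- integrability of g on Ioi 0
  have hgmeas : AEStronglyMeasurable g (volume.restrict (Ioi (0:ℝ))) := by
    exact ((hcont.mul ((Real.continuous_sin.comp (continuous_const.mul continuous_id)).continuousOn)).aestronglyMeasurable measurableSet_Ioi)
  have hgint : IntegrableOn g (Ioi (0:ℝ)) := by
    refine Integrable.mono' hint.abs hgmeas ?_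
    filter_upwards with t
    rw [hg]
    simp only [Real.norm_eq_abs, abs_mul]
    calc |f t| * |Real.sin (c * t)| ≤ |f t| * 1 :=
          mul_le_mul_of_nonneg_left (Real.abs_sin_le_one (c*t)) (abs_nonneg _)
      _ = |f t| := mul_one _
  have hII : ∀ a b : ℝ, 0 ≤ a → 0 ≤ b → IntervalIntegrable g volume a b := by
    intro a b ha hb
    rw [intervalIntegrable_iff]
    exact hgint.mono_set (fun x hx => lt_of_le_of_lt (le_min ha hb) hx.1)
  -- key half-period identity
  have key : ∀ a : ℝ, 0 ≤ a → (∫ t in a..(a + 2*h), g t) = ∫ t in a..(a+h), (g t + g (t+h)) := by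
    intro a ha
    have h1 : IntervalIntegrable g volume a (a + h) := hII _ _ ha (by positivity)
    have h2 : IntervalIntegrable g volume (a + h) (a + 2*h) := hII _ _ (by positivity) (by positivity)
    have hgsh : IntervalIntegrable (fun t => g (t + h)) volume a (a + h) := by
      have h3 := h2.comp_add_right h
      rw [show a + h - h = a by ring, show a + 2*h - h = a + h by ring] at h3
      exact h3
    rw [← integral_add_adjacent_intervals h1 h2]
    rw [intervalIntegral.integral_add h1 hgsh]
    congr 1
    rw [show a + 2*h = (a + h) + h by ring, ← intervalIntegral.integral_comp_add_right g h]
  have hptwise : ∀ t : ℝ, g t + g (t + h) = (f t - f (t+h)) * Real.sin (c * t) := by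
    intro t
    rw [hg]; simp only
    rw [mul_add, hch, Real.sin_add_pi]
    try ring
  have hcT : c * T = 2 * Real.pi := by rw [hc, hT]; field_simp
  have hsin_nonneg : ∀ n : ℕ, ∀ t ∈ Icc ((n:ℝ)*T) ((n:ℝ)*T + h), 0 ≤ Real.sin (c * t) := by
    rintro n t ⟨ht1, ht2⟩
    have hper : Real.sin (c * t) = Real.sin (c * (t - (n:ℝ)*T)) := by
      rw [show c * t = c * (t - (n:ℝ)*T) + (n:ℤ) * (2 * Real.pi) by push_cast; linear_combination (n:ℝ) * hcT]
      rw [Real.sin_add_int_mul_two_pi]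
    rw [hper]
    apply Real.sin_nonneg_of_nonneg_of_le_pi
    · exact mul_nonneg hcpos.le (by linarith)
    · calc c * (t - (n:ℝ)*T) ≤ c * h := by
            exact mul_le_mul_of_nonneg_left (by linarith) hcpos.le
        _ = Real.pi := hch
  have hJnonneg : ∀ n : ℕ, 0 ≤ ∫ t in ((n:ℝ)*T)..(((n:ℝ)*T) + 2*h), g t := by
    intro n
    rw [key _ (by positivity)]
    apply intervalIntegral.integral_nonneg (by linarith)
    intro u hu
    have hs := hsin_nonneg n u hu
    rw [hptwise]
    rcases eq_or_lt_of_le (le_trans (by positivity : (0:ℝ) ≤ (n:ℝ)*T) hu.1) with h0 | h0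
    · rw [← h0]; simp
    · have hfu : f (u+h) < f u := hanti (mem_Ioi.2 h0) (mem_Ioi.2 (by linarith)) (by linarith)
      exact mul_nonneg (by linarith) hs
  -- strict positivity of the first block
  have hJ0 : 0 < ∫ t in (0:ℝ)..(0 + 2*h), g t := by
    rw [key 0 le_rfl]
    apply intervalIntegral.intervalIntegral_pos_of_pos_on
    · apply (hII 0 (0+h) le_rfl (by positivity)).add
      have h3 := (hII (0+h) (0+2*h) (by positivity) (by positivity)).comp_add_right h
      rw [show 0 + h - h = (0:ℝ) by ring, show 0 + 2*h - h = 0 + h by ring] at h3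
      exact h3
    · intro x hx
      have hx1 : 0 < x := hx.1
      have hx2 : x < h := by have := hx.2; linarith
      rw [hptwise]
      have hfd : f (x+h) < f x := hanti (mem_Ioi.2 hx1) (mem_Ioi.2 (by linarith)) (by linarith)
      have hsin : 0 < Real.sin (c * x) := by
        apply Real.sin_pos_of_pos_of_lt_pi (by positivity)
        rw [← hch]
        exact (mul_lt_mul_iff_right₀ hcpos).2 hx2
      exact mul_pos (by linarith) hsin
    · linarith
  -- partial sums
  have hQ : ∀ n : ℕ, (∫ t in (0:ℝ)..(0 + 2*h), g t) ≤ ∫ t in (0:ℝ)..(((n:ℝ)+1)*T), g t := by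
    intro n
    induction n with
    | zero =>
      simp only [Nat.cast_zero]
      rw [show ((0:ℝ)+1)*T = 0 + 2*h by rw [hT2h]; ring]
    | succ n ih =>
      have h1 : IntervalIntegrable g volume 0 (((n:ℝ)+1)*T) := hII _ _ le_rfl (by positivity)
      have h2 : IntervalIntegrable g volume (((n:ℝ)+1)*T) ((((n:ℝ)+1)*T) + 2*h) :=
        hII _ _ (by positivity) (by positivity)
      have hbc : (((n:ℕ)+1:ℝ)+1)*T = ((n:ℝ)+1)*T + 2*h := by rw [hT2h]; push_cast; ring
      push_cast
      rw [hbc, ← integral_add_adjacent_intervals h1 h2]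
      have hnn : 0 ≤ ∫ t in (((n:ℝ)+1)*T)..((((n:ℝ)+1)*T) + 2*h), g t := by
        have := hJnonneg (n+1)
        push_cast at this
        exact this
      linarith
  -- pass to the limit
  have hmono_sets : Monotone (fun N : ℕ => Ioc (0:ℝ) ((N:ℝ)*T)) := by
    intro i j hij
    apply Ioc_subset_Ioc_right
    exact mul_le_mul_of_nonneg_right (Nat.cast_le.2 hij) hTpos.le
  have hunion : (⋃ N : ℕ, Ioc (0:ℝ) ((N:ℝ)*T)) = Ioi 0 := by
    ext x
    simp only [mem_iUnion, mem_Ioc, mem_Ioi]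
    constructor
    · rintro ⟨N, h1, _⟩; exact h1
    · intro hx
      obtain ⟨N, hN⟩ := exists_nat_ge (x / T)
      rw [div_le_iff₀ hTpos] at hN
      exact ⟨N, hx, by linarith⟩
  have htends := tendsto_setIntegral_of_monotone (fun N => measurableSet_Ioc) hmono_sets
    (by rw [hunion]; exact hgint)
  rw [hunion] at htends
  have hfinal : (∫ t in (0:ℝ)..(0 + 2*h), g t) ≤ ∫ t in Ioi (0:ℝ), g t := by
    apply ge_of_tendsto htends
    filter_upwards [Filter.eventually_ge_atTop 1] with N hN
    rw [← intervalIntegral.integral_of_le (by positivity : (0:ℝ) ≤ (N:ℝ)*T)]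
    have h2 := hQ (N-1)
    have hcast : ((N-1:ℕ):ℝ) + 1 = (N:ℝ) := by
      rw [Nat.cast_sub hN]; push_cast; ring
    rw [hcast] at h2
    exact h2
  show 0 < ∫ t in Ioi (0:ℝ), g t
  linarith


lemma sqrt_inv_integrable (A B : ℝ) (hAB : 4 * A ^ 3 + 27 * B ^ 2 ≠ 0)
    (F : ℝ → ℝ) (hF : ∀ x, F x = x ^ 3 + A * x + B)
    (e : ℝ) (he0 : F e = 0) (hepos : ∀ x, e < x → 0 < F x) :
    IntegrableOn (fun x => (Real.sqrt (F x))⁻¹) (Ioi e) := by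
  have hFc : Continuous F := by
    have hFe : F = fun x => x ^ 3 + A * x + B := funext hF
    rw [hFe]; continuity
  have hB : B = -e^3 - A*e := by have := he0; rw [hF] at this; linarith
  set G : ℝ → ℝ := fun x => x^2 + e*x + (e^2 + A) with hG
  have hGc : Continuous G := by rw [hG]; continuity
  have hFG : ∀ x, F x = (x - e) * G x := by intro x; rw [hF, hG, hB]; ring
  have hGpos : ∀ x, e < x → 0 < G x := by
    intro x hx
    have h1 := hepos x hx
    rw [hFG] at h1
    nlinarith
  have hGe_ne : G e ≠ 0 := by
    intro hGe
    apply hAB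
    have hA : A = -3*e^2 := by
      have : e^2 + e*e + (e^2 + A) = 0 := hGe
      linarith
    rw [hA, hB, hA]; ring
  have hGe : 0 < G e := by
    rcases lt_or_gt_of_ne hGe_ne with hlt | hgt
    · exfalso
      have htd : Filter.Tendsto G (nhds e) (nhds (G e)) := hGc.continuousAt
      have hev : ∀ᶠ x in nhdsWithin e (Ioi e), G x < 0 :=
        (htd.eventually (Filter.Tendsto.eventually_lt_const hlt Filter.tendsto_id)).filter_mono nhdsWithin_le_nhds
      obtain ⟨x, hx1, hx2⟩ := (hev.and self_mem_nhdsWithin).exists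
      exact absurd (hGpos x hx2) (not_lt.2 hx1.le)
    · exact hgt
  -- the function is measurable
  have hmeas : Measurable (fun x => (Real.sqrt (F x))⁻¹) :=
    ((Real.continuous_sqrt.comp hFc).measurable).inv
  -- positive lower bound for G on [e, e+1]
  have hGpos' : ∀ x ∈ Icc e (e+1), 0 < G x := by
    intro x hx
    rcases eq_or_lt_of_le hx.1 with h1 | h1
    · rw [← h1]; exact hGe
    · exact hGpos x h1
  obtain ⟨x₀, hx₀mem, hx₀min⟩ := isCompact_Icc.exists_isMinOn (nonempty_Icc.2 (by linarith))
    (hGc.continuousOn (s := Icc e (e+1)))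
  set δ : ℝ := G x₀ with hδ
  have hδpos : 0 < δ := hGpos' x₀ hx₀mem
  have hδle : ∀ x ∈ Icc e (e+1), δ ≤ G x := fun x hx => hx₀min hx
  -- piece 1 : (e, e+1]
  have hp1 : IntegrableOn (fun x => (Real.sqrt (F x))⁻¹) (Ioc e (e+1)) := by
    have hbound : IntegrableOn (fun x => (Real.sqrt δ)⁻¹ * (x - e) ^ (-(1/2) : ℝ)) (Ioc e (e+1)) := by
      apply Integrable.const_mul
      have h1 : IntervalIntegrable (fun x : ℝ => x ^ (-(1/2) : ℝ)) volume 0 1 :=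
        intervalIntegral.intervalIntegrable_rpow' (by norm_num)
      have h2 := h1.comp_add_right (-e)
      rw [show (0:ℝ) - (-e) = e by ring, show (1:ℝ) - (-e) = e + 1 by ring] at h2
      rw [intervalIntegrable_iff_integrableOn_Ioc_of_le (by linarith)] at h2
      have : (fun x : ℝ => (x + -e) ^ (-(1/2) : ℝ)) = fun x : ℝ => (x - e) ^ (-(1/2) : ℝ) := by
        funext x; rw [sub_eq_add_neg]
      rwa [this] at h2
    apply Integrable.mono' hbound (hmeas.aestronglyMeasurable.restrict)
    rw [ae_restrict_iff' measurableSet_Ioc]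
    filter_upwards with x hx
    have hxe : 0 < x - e := by linarith [hx.1]
    have hGx : δ ≤ G x := hδle x ⟨hx.1.le, hx.2⟩
    have hsF : Real.sqrt (F x) = Real.sqrt (x - e) * Real.sqrt (G x) := by
      rw [hFG, Real.sqrt_mul hxe.le]
    have hpos : 0 < Real.sqrt (x - e) * Real.sqrt δ :=
      mul_pos (Real.sqrt_pos.2 hxe) (Real.sqrt_pos.2 hδpos)
    have hle : Real.sqrt (x - e) * Real.sqrt δ ≤ Real.sqrt (F x) := by
      rw [hsF]
      exact mul_le_mul_of_nonneg_left (Real.sqrt_le_sqrt hGx) (Real.sqrt_nonneg _)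
    rw [Real.norm_eq_abs, abs_of_nonneg (inv_nonneg.2 (Real.sqrt_nonneg _))]
    calc (Real.sqrt (F x))⁻¹ ≤ (Real.sqrt (x - e) * Real.sqrt δ)⁻¹ :=
          inv_anti₀ hpos hle
      _ = (Real.sqrt δ)⁻¹ * (x - e) ^ (-(1/2) : ℝ) := by
          rw [mul_inv, Real.rpow_neg hxe.le, Real.sqrt_eq_rpow]
          ring
  set M : ℝ := max (max (e+1) (2*(|A|+|B|)+1)) 1 with hM
  have hM1 : (1:ℝ) ≤ M := le_max_right _ _
  have hMe : e + 1 ≤ M := le_trans (le_max_left _ _) (le_max_left _ _)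
  have hMab : 2*(|A|+|B|)+1 ≤ M := le_trans (le_max_right _ _) (le_max_left _ _)
  have hMpos : 0 < M := by linarith
  -- piece 3 : (M, ∞)
  have hp3 : IntegrableOn (fun x => (Real.sqrt (F x))⁻¹) (Ioi M) := by
    have hbound : IntegrableOn (fun x : ℝ => Real.sqrt 2 * x ^ (-(3/2) : ℝ)) (Ioi M) :=
      (integrableOn_Ioi_rpow_of_lt (by norm_num) hMpos).const_mul _
    apply Integrable.mono' hbound (hmeas.aestronglyMeasurable.restrict)
    rw [ae_restrict_iff' measurableSet_Ioi]
    filter_upwards with x hx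
    rw [mem_Ioi] at hx
    have hx1 : 1 ≤ x := by linarith
    have hxpos : 0 < x := by linarith
    have hFx : x^3 / 2 ≤ F x := by
      rw [hF]
      have h1 : |A * x + B| ≤ (|A| + |B|) * x^2 := by
        calc |A * x + B| ≤ |A| * x + |B| := by
              refine le_trans (abs_add_le _ _) ?_
              rw [abs_mul, abs_of_nonneg hxpos.le]
          _ ≤ (|A| + |B|) * x^2 := by
              nlinarith [mul_nonneg (abs_nonneg A) (show (0:ℝ) ≤ x^2 - x by nlinarith),
                mul_nonneg (abs_nonneg B) (show (0:ℝ) ≤ x^2 - 1 by nlinarith)]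
      have h2 : (|A| + |B|) * x^2 ≤ x^3 / 2 := by nlinarith [abs_nonneg A, abs_nonneg B]
      have h3 := abs_le.1 h1
      nlinarith
    have hFxpos : 0 < F x := by nlinarith [pow_pos hxpos 3]
    have hle : Real.sqrt (x^3/2) ≤ Real.sqrt (F x) := Real.sqrt_le_sqrt hFx
    have hpos2 : 0 < Real.sqrt (x^3/2) := Real.sqrt_pos.2 (by positivity)
    rw [Real.norm_eq_abs, abs_of_nonneg (inv_nonneg.2 (Real.sqrt_nonneg _))]
    calc (Real.sqrt (F x))⁻¹ ≤ (Real.sqrt (x^3/2))⁻¹ := inv_anti₀ hpos2 hle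
      _ = Real.sqrt 2 * x ^ (-(3/2) : ℝ) := by
          rw [show x^3/2 = x^3 * 2⁻¹ by ring, Real.sqrt_mul (by positivity),
            mul_inv, Real.sqrt_inv, inv_inv]
          rw [Real.sqrt_eq_rpow (x^3), ← Real.rpow_natCast x 3, ← Real.rpow_mul hxpos.le,
            ← Real.rpow_neg hxpos.le]
          norm_num
          ring
  -- piece 2 : [e+1, M]
  have hp2 : IntegrableOn (fun x => (Real.sqrt (F x))⁻¹) (Icc (e+1) M) := by
    apply ContinuousOn.integrableOn_compact isCompact_Icc
    apply ContinuousOn.inv₀ ((Real.continuous_sqrt.comp hFc).continuousOn)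
    intro x hx
    exact ne_of_gt (Real.sqrt_pos.2 (hepos x (by linarith [hx.1])))
  -- combine
  have : Ioi e ⊆ Ioc e (e+1) ∪ (Icc (e+1) M ∪ Ioi M) := by
    intro x hx
    rw [mem_Ioi] at hx
    rcases le_or_gt x (e+1) with h1 | h1
    · exact Or.inl ⟨hx, h1⟩
    · rcases le_or_gt x M with h2 | h2
      · exact Or.inr (Or.inl ⟨h1.le, h2⟩)
      · exact Or.inr (Or.inr h2)
  exact (hp1.union (hp2.union hp3)).mono_set this

/-- Let `F(x) = x³ + Ax + B` (with `4A³ + 27B² ≠ 0`), `e` its largest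
real root, `y = √F`, and assume `y` is strictly increasing on `(e,∞)`. Then for
every nonzero integer `k`, `∫_e^∞ exp(2πikx)/y(x) dx ≠ 0`. -/
theorem stmt19 (A B : ℝ) (hAB : 4 * A ^ 3 + 27 * B ^ 2 ≠ 0)
    (F : ℝ → ℝ) (hF : ∀ x, F x = x ^ 3 + A * x + B)
    (e : ℝ) (he0 : F e = 0) (hepos : ∀ x, e < x → 0 < F x)
    (hmono : StrictMonoOn (fun x => Real.sqrt (F x)) (Ioi e))
    (k : ℤ) (hk : k ≠ 0) :
    ∫ x in Ioi e, Complex.exp (2 * (Real.pi : ℂ) * Complex.I * (k : ℂ) * (x : ℂ)) /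
      (Real.sqrt (F x) : ℂ) ≠ 0 := by
  have hFc : Continuous F := by
    have hFe : F = fun x => x ^ 3 + A * x + B := funext hF
    rw [hFe]; continuity
  have hint : IntegrableOn (fun x => (Real.sqrt (F x))⁻¹) (Ioi e) :=
    sqrt_inv_integrable A B hAB F hF e he0 hepos
  set f : ℝ → ℝ := fun t => (Real.sqrt (F (t + e)))⁻¹ with hfdef
  -- shift the integral to (0, ∞)
  have hmp : MeasurePreserving (fun t : ℝ => t + e) volume volume :=
    measurePreserving_add_right volume e
  have hemb : MeasurableEmbedding (fun t : ℝ => t + e) :=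
    (Homeomorph.addRight e).measurableEmbedding
  have hpre : (fun t : ℝ => t + e) ⁻¹' (Ioi e) = Ioi 0 := by
    ext t; simp
  have hshift := hmp.setIntegral_preimage_emb hemb
    (fun x => Complex.exp (2 * (Real.pi : ℂ) * Complex.I * (k : ℂ) * (x : ℂ)) /
      (Real.sqrt (F x) : ℂ)) (Ioi e)
  rw [hpre] at hshift
  rw [← hshift]
  -- split the exponential
  have heq : ∀ t : ℝ,
      Complex.exp (2 * (Real.pi : ℂ) * Complex.I * (k : ℂ) * (((t + e : ℝ)) : ℂ)) /
        (Real.sqrt (F (t + e)) : ℂ)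
      = Complex.exp (2 * (Real.pi : ℂ) * Complex.I * (k : ℂ) * (e : ℂ)) *
        (Complex.exp (2 * (Real.pi : ℂ) * Complex.I * (k : ℂ) * (t : ℂ)) * ((f t : ℝ) : ℂ)) := by
    intro t
    rw [div_eq_mul_inv, hfdef]
    push_cast
    rw [show 2 * (Real.pi : ℂ) * Complex.I * (k : ℂ) * ((t:ℂ) + (e:ℂ))
        = 2 * (Real.pi : ℂ) * Complex.I * (k : ℂ) * (e:ℂ)
          + 2 * (Real.pi : ℂ) * Complex.I * (k : ℂ) * (t:ℂ) by ring, Complex.exp_add]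
    ring
  simp only [heq]
  rw [integral_const_mul]
  apply mul_ne_zero (Complex.exp_ne_zero _)
  -- the shifted integrand
  have hf_int : IntegrableOn f (Ioi (0:ℝ)) := by
    have := (hmp.integrableOn_comp_preimage hemb (s := Ioi e)
      (f := fun x => (Real.sqrt (F x))⁻¹)).2 hint
    rwa [hpre] at this
  have hf_cont : ContinuousOn f (Ioi (0:ℝ)) := by
    apply ContinuousOn.inv₀
    · exact (Real.continuous_sqrt.comp (hFc.comp (continuous_id.add continuous_const))).continuousOn
    · intro t ht
      exact ne_of_gt (Real.sqrt_pos.2 (hepos _ (by simp at ht; linarith)))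
  have hf_anti : StrictAntiOn f (Ioi (0:ℝ)) := by
    intro s hs t ht hst
    simp only [mem_Ioi] at hs ht
    have h1 : Real.sqrt (F (s + e)) < Real.sqrt (F (t + e)) :=
      hmono (by simp [mem_Ioi]; linarith) (by simp [mem_Ioi]; linarith) (by linarith)
    exact inv_strictAnti₀ (Real.sqrt_pos.2 (hepos _ (by linarith))) h1
  have hf_meas : Measurable f :=
    ((Real.continuous_sqrt.comp (hFc.comp (continuous_id.add continuous_const))).measurable).inv
  have hJint : Integrable (fun t : ℝ =>
      Complex.exp (2 * (Real.pi : ℂ) * Complex.I * (k : ℂ) * (t : ℂ)) * ((f t : ℝ) : ℂ))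
      (volume.restrict (Ioi (0:ℝ))) := by
    apply Integrable.mono' hf_int.abs
    · apply AEStronglyMeasurable.mul
      · exact (Complex.continuous_exp.comp ((continuous_const.mul Complex.continuous_ofReal))).aestronglyMeasurable
      · exact (Complex.measurable_ofReal.comp hf_meas).aestronglyMeasurable
    · filter_upwards with t
      rw [norm_mul, show 2 * (Real.pi : ℂ) * Complex.I * (k : ℂ) * (t : ℂ)
          = ((2 * Real.pi * (k:ℝ) * t : ℝ) : ℂ) * Complex.I by push_cast; ring]
      rw [Complex.norm_exp_ofReal_mul_I, one_mul, Complex.norm_real,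
        Real.norm_eq_abs]
  have him : (∫ t in Ioi (0:ℝ),
      Complex.exp (2 * (Real.pi : ℂ) * Complex.I * (k : ℂ) * (t : ℂ)) * ((f t : ℝ) : ℂ)).im
      = ∫ t in Ioi (0:ℝ), f t * Real.sin (2 * Real.pi * (k:ℝ) * t) := by
    have h1 := integral_im (μ := volume.restrict (Ioi (0:ℝ))) hJint
    simp only [RCLike.im_to_complex] at h1
    rw [← h1]
    apply integral_congr_ae
    filter_upwards with t
    rw [show 2 * (Real.pi : ℂ) * Complex.I * (k : ℂ) * (t : ℂ)
        = ((2 * Real.pi * (k:ℝ) * t : ℝ) : ℂ) * Complex.I by push_cast; ring]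
    rw [Complex.mul_im, Complex.exp_ofReal_mul_I_im]
    simp only [Complex.ofReal_im, Complex.ofReal_re, mul_zero, zero_add]
    ring
  intro hJ0
  rw [hJ0] at him
  simp only [Complex.zero_im] at him
  -- the imaginary part is nonzero
  rcases hk.lt_or_gt with hkneg | hkpos
  · set m : ℕ := (-k).toNat with hm
    have hm0 : 0 < m := by omega
    have hkm : (k : ℝ) = -(m : ℝ) := by
      have h1 : k = -(((-k).toNat : ℤ)) := by omega
      rw [hm]; exact_mod_cast h1
    have hS := sin_integral_pos f hf_int hf_cont hf_anti m hm0
    have hflip : ∀ t : ℝ, f t * Real.sin (2 * Real.pi * (k:ℝ) * t)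
        = -(f t * Real.sin (2 * Real.pi * (m:ℝ) * t)) := by
      intro t
      rw [show 2 * Real.pi * (k:ℝ) * t = -(2 * Real.pi * (m:ℝ) * t) by rw [hkm]; ring,
        Real.sin_neg]
      ring
    rw [show (∫ t in Ioi (0:ℝ), f t * Real.sin (2 * Real.pi * (k:ℝ) * t))
        = -∫ t in Ioi (0:ℝ), f t * Real.sin (2 * Real.pi * (m:ℝ) * t) by
      rw [← integral_neg]; exact integral_congr_ae (Filter.Eventually.of_forall fun t => hflip t)] at him
    linarith
  · set m : ℕ := k.toNat with hm
    have hm0 : 0 < m := by omega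
    have hkm : (k : ℝ) = (m : ℝ) := by
      have h1 : k = ((k.toNat : ℤ)) := by omega
      rw [hm]; exact_mod_cast h1
    have hS := sin_integral_pos f hf_int hf_cont hf_anti m hm0
    rw [hkm] at him
    linarith
end
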